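/- arXiv:2507.09922 — 3 statements merged into one kernel-verified Lean document; each statement's English description precedes it below -/
import Mathlib

section
/- Let N ≥ 2 be an integer and 1 < p < ∞ with conjugate exponent p'. Let f ∈ L^p(ℝ^N × ℝ^N) be nonnegative with finite kinetic energy 𝒦(f) = ∫_{ℝ^N×ℝ^N} |v|² f(x,v) dx dv < ∞, and set ρ(x) = ∫_{ℝ^N} f(x,v) dv. Let r = r(p) = (2p + N(p−1))/(2 + N(p−1)). Then ρ ∈ L^r(ℝ^N) and ‖ρ‖_{L^r} ≤ (1 + (ω_N/N)^{1/p'}) · ‖f‖_{L^p}^{2p'/(N+2p')} · 𝒦(f)^{N/(N+2p')}. -/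
open MeasureTheory
open scoped ENNReal
open Metric

lemma real_opt {q D α β g k : ℝ} (hq : 0 < q) (hD : 0 < D) (hαβ : α + β = 1)
    (hα : α = 2 * q / D)
    (hg : 0 < g) (hk : 0 < k) {R : ℝ} (hR : R = (k/g) ^ (q/D)) :
    R ^ ((D - 2*q)/q) * g = g ^ α * k ^ β ∧ (R^2)⁻¹ * k = g ^ α * k ^ β := by
  have hβ : β = (D - 2*q)/D := by
    have h1 : β = 1 - α := by linarith
    rw [h1, hα]; field_simp
  have hkg : 0 < k / g := div_pos hk hg
  constructor
  · have h1 : R ^ ((D - 2*q)/q) = (k/g) ^ β := by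
      rw [hR, ← Real.rpow_mul hkg.le]
      congr 1
      rw [hβ]; field_simp
    rw [h1]
    calc (k/g) ^ β * g = (k ^ β / g ^ β) * g := by rw [Real.div_rpow hk.le hg.le]
      _ = k ^ β * (g ^ (1:ℝ) / g ^ β) := by rw [Real.rpow_one]; ring
      _ = k ^ β * g ^ (1 - β) := by rw [← Real.rpow_sub hg]
      _ = g ^ α * k ^ β := by rw [show (1:ℝ) - β = α by linarith]; ring
  · have h2 : (R ^ 2)⁻¹ = (g/k) ^ α := by
      rw [hR, ← Real.rpow_natCast ((k/g) ^ (q/D)) 2, ← Real.rpow_mul hkg.le,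
        ← Real.rpow_neg hkg.le, Real.rpow_neg hkg.le, ← Real.inv_rpow hkg.le, inv_div]
      · congr 1
        rw [hα]; push_cast; ring
    have hgk : 0 < g / k := div_pos hg hk
    calc (R ^ 2)⁻¹ * k = (g ^ α / k ^ α) * k := by rw [h2, Real.div_rpow hg.le hk.le]
      _ = g ^ α * (k ^ (1:ℝ) / k ^ α) := by rw [Real.rpow_one]; ring
      _ = g ^ α * k ^ (1 - α) := by rw [← Real.rpow_sub hk]
      _ = g ^ α * k ^ β := by rw [show (1:ℝ) - α = β by linarith]

lemma slice_bound {N : ℕ} (hN : 1 ≤ N) {p q α β : ℝ} (hpq : p.HolderConjugate q)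
    (hα : α = 2*q/((N:ℝ)+2*q)) (hβ : β = (N:ℝ)/((N:ℝ)+2*q))
    (h : EuclideanSpace ℝ (Fin N) → ℝ≥0∞) (hmeas : Measurable h)
    (hGp : ∫⁻ v, h v ^ p ≠ ⊤) (hK : ∫⁻ v, ENNReal.ofReal (‖v‖^2) * h v ≠ ⊤) :
    ∫⁻ v, h v ≤ (1 + (volume (ball (0 : EuclideanSpace ℝ (Fin N)) 1)) ^ (1/q)) *
      (∫⁻ v, h v ^ p) ^ (α/p) * (∫⁻ v, ENNReal.ofReal (‖v‖^2) * h v) ^ β := by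
  haveI : Nontrivial (EuclideanSpace ℝ (Fin N)) := by
    apply Module.nontrivial_of_finrank_pos (R := ℝ)
    rw [finrank_euclideanSpace_fin]; omega
  have hq1 : 1 < q := hpq.symm.lt
  have hq0 : 0 < q := lt_trans one_pos hq1
  have hp1 : 1 < p := hpq.lt
  have hp0 : 0 < p := lt_trans one_pos hp1
  have hD : 0 < (N:ℝ) + 2*q := by positivity
  have hα0 : 0 < α := by rw [hα]; positivity
  have hβ0 : 0 < β := by
    rw [hβ]; apply div_pos _ hD; exact_mod_cast Nat.lt_of_lt_of_le Nat.zero_lt_one hN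
  have hαβ : α + β = 1 := by rw [hα, hβ]; field_simp; ring
  set B := volume (ball (0 : EuclideanSpace ℝ (Fin N)) 1) with hB
  set Gp := ∫⁻ v, h v ^ p with hGpdef
  set K := ∫⁻ v, ENNReal.ofReal (‖v‖^2) * h v with hKdef
  have hmeasp : Measurable fun v => h v ^ p := hmeas.pow_const p
  by_cases hGp0 : Gp = 0
  · have h0 : ∀ᵐ (v : EuclideanSpace ℝ (Fin N)), h v = 0 := by
      have := (lintegral_eq_zero_iff hmeasp).mp hGp0
      filter_upwards [this] with v hv
      rcases (ENNReal.rpow_eq_zero_iff.mp hv) with ⟨h1, _⟩ | ⟨_, h2⟩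
      · exact h1
      · linarith
    rw [lintegral_congr_ae h0]
    simp
  by_cases hK0 : K = 0
  · have h0 : ∀ᵐ (v : EuclideanSpace ℝ (Fin N)), h v = 0 := by
      have h1 : ∀ᵐ (v : EuclideanSpace ℝ (Fin N)), ENNReal.ofReal (‖v‖^2) * h v = 0 :=
        (lintegral_eq_zero_iff ((ENNReal.measurable_ofReal.comp
          ((measurable_norm).pow_const 2)).mul hmeas)).mp hK0
      have h2 : ∀ᵐ (v : EuclideanSpace ℝ (Fin N)), v ≠ 0 := by
        rw [ae_iff]; simpa using measure_singleton (0 : EuclideanSpace ℝ (Fin N))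
      filter_upwards [h1, h2] with v hv hv0
      rcases mul_eq_zero.mp hv with h3 | h3
      · exfalso
        rw [ENNReal.ofReal_eq_zero] at h3
        have : 0 < ‖v‖ ^ 2 := pow_pos (norm_pos_iff.mpr hv0) 2
        linarith
      · exact h3
    rw [lintegral_congr_ae h0]
    simp
  -- main case
  have hGpfin : Gp ≠ ⊤ := hGp
  have hKfin : K ≠ ⊤ := hK
  set g := (Gp ^ (1/p)).toReal with hgdef
  set k := K.toReal with hkdef
  have hGppow_ne0 : Gp ^ (1/p) ≠ 0 := by
    simp [ENNReal.rpow_eq_zero_iff, hGp0, hGpfin, hp0, (by positivity : (0:ℝ) < 1/p)]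
  have hGppow_netop : Gp ^ (1/p) ≠ ⊤ := by
    simp [ENNReal.rpow_eq_top_iff, hGp0, hGpfin, hp0, (by positivity : (0:ℝ) < 1/p)]
  have hg0 : 0 < g := ENNReal.toReal_pos hGppow_ne0 hGppow_netop
  have hk0 : 0 < k := ENNReal.toReal_pos hK0 hKfin
  have hGeq : Gp ^ (1/p) = ENNReal.ofReal g := (ENNReal.ofReal_toReal hGppow_netop).symm
  have hKeq : K = ENNReal.ofReal k := (ENNReal.ofReal_toReal hKfin).symm
  set R := (k/g) ^ (q/((N:ℝ)+2*q)) with hRdef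
  have hR0 : 0 < R := Real.rpow_pos_of_pos (div_pos hk0 hg0) _
  obtain ⟨hopt1, hopt2⟩ := real_opt hq0 hD hαβ hα hg0 hk0 hRdef
  have h1q : (0:ℝ) ≤ 1/q := by positivity
  have hin : ∫⁻ v in ball (0 : EuclideanSpace ℝ (Fin N)) R, h v ≤
      ENNReal.ofReal g * (ENNReal.ofReal (R^N) * B) ^ (1/q) := by
    calc ∫⁻ v in ball (0 : EuclideanSpace ℝ (Fin N)) R, h v
        = ∫⁻ v in ball (0 : EuclideanSpace ℝ (Fin N)) R, h v * 1 := by simp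
      _ ≤ (∫⁻ v in ball (0 : EuclideanSpace ℝ (Fin N)) R, h v ^ p) ^ (1/p) *
          (∫⁻ _v in ball (0 : EuclideanSpace ℝ (Fin N)) R, (1:ℝ≥0∞) ^ q) ^ (1/q) :=
          ENNReal.lintegral_mul_le_Lp_mul_Lq _ hpq hmeas.aemeasurable aemeasurable_const
      _ ≤ Gp ^ (1/p) * (volume (ball (0 : EuclideanSpace ℝ (Fin N)) R)) ^ (1/q) := by
          gcongr
          · exact setLIntegral_le_lintegral _ _
          · simp
      _ = ENNReal.ofReal g * (ENNReal.ofReal (R^N) * B) ^ (1/q) := by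
          rw [hGeq, Measure.addHaar_ball volume _ hR0.le, finrank_euclideanSpace_fin]
  have hRsq0 : ENNReal.ofReal (R^2) ≠ 0 := (ENNReal.ofReal_pos.mpr (by positivity)).ne'
  have hout : ∫⁻ v in (ball (0 : EuclideanSpace ℝ (Fin N)) R)ᶜ, h v ≤
      (ENNReal.ofReal (R^2))⁻¹ * K := by
    have step : ∀ v ∈ (ball (0 : EuclideanSpace ℝ (Fin N)) R)ᶜ,
        h v ≤ (ENNReal.ofReal (R^2))⁻¹ * (ENNReal.ofReal (‖v‖^2) * h v) := by
      intro v hv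
      have hRv : R ≤ ‖v‖ := by
        simp only [Set.mem_compl_iff, mem_ball, dist_zero_right, not_lt] at hv; exact hv
      have hle : ENNReal.ofReal (R^2) ≤ ENNReal.ofReal (‖v‖^2) :=
        ENNReal.ofReal_le_ofReal (by nlinarith)
      calc h v = (ENNReal.ofReal (R^2))⁻¹ * ENNReal.ofReal (R^2) * h v := by
            rw [ENNReal.inv_mul_cancel hRsq0 ENNReal.ofReal_ne_top, one_mul]
        _ ≤ (ENNReal.ofReal (R^2))⁻¹ * (ENNReal.ofReal (‖v‖^2) * h v) := by
            rw [mul_assoc]; exact mul_le_mul_right (mul_le_mul_left hle _) _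
    calc ∫⁻ v in (ball (0 : EuclideanSpace ℝ (Fin N)) R)ᶜ, h v
        ≤ ∫⁻ v in (ball (0 : EuclideanSpace ℝ (Fin N)) R)ᶜ,
            (ENNReal.ofReal (R^2))⁻¹ * (ENNReal.ofReal (‖v‖^2) * h v) :=
          setLIntegral_mono' measurableSet_ball.compl step
      _ ≤ ∫⁻ v, (ENNReal.ofReal (R^2))⁻¹ * (ENNReal.ofReal (‖v‖^2) * h v) :=
          setLIntegral_le_lintegral _ _
      _ = (ENNReal.ofReal (R^2))⁻¹ * K := lintegral_const_mul' _ _ (ENNReal.inv_ne_top.mpr hRsq0)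
  have key : ∫⁻ v, h v ≤ ENNReal.ofReal g * (ENNReal.ofReal (R^N) * B) ^ (1/q) +
      (ENNReal.ofReal (R^2))⁻¹ * K := by
    rw [← lintegral_add_compl h (measurableSet_ball (x := (0 : EuclideanSpace ℝ (Fin N))) (ε := R))]
    exact add_le_add hin hout
  have hRN : ((R^N : ℝ))^(1/q) * g = g ^ α * k ^ β := by
    rw [← Real.rpow_natCast R N, ← Real.rpow_mul hR0.le, ← hopt1]
    congr 2
    field_simp
    ring
  have e1 : ENNReal.ofReal g * (ENNReal.ofReal (R^N) * B) ^ (1/q) =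
      ENNReal.ofReal (g ^ α * k ^ β) * B ^ (1/q) := by
    calc ENNReal.ofReal g * (ENNReal.ofReal (R^N) * B) ^ (1/q)
        = ENNReal.ofReal g * (ENNReal.ofReal ((R^N)^(1/q)) * B ^ (1/q)) := by
          rw [ENNReal.mul_rpow_of_nonneg _ _ h1q, ENNReal.ofReal_rpow_of_pos (by positivity)]
      _ = (ENNReal.ofReal ((R^N)^(1/q)) * ENNReal.ofReal g) * B ^ (1/q) := by ring
      _ = ENNReal.ofReal ((R^N)^(1/q) * g) * B ^ (1/q) := by
          rw [← ENNReal.ofReal_mul (by positivity)]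
      _ = ENNReal.ofReal (g ^ α * k ^ β) * B ^ (1/q) := by rw [hRN]
  have e2 : (ENNReal.ofReal (R^2))⁻¹ * K = ENNReal.ofReal (g ^ α * k ^ β) := by
    rw [← ENNReal.ofReal_inv_of_pos (by positivity), hKeq,
      ← ENNReal.ofReal_mul (by positivity), hopt2]
  have e3 : Gp ^ (α/p) * K ^ β = ENNReal.ofReal (g ^ α * k ^ β) := by
    rw [show α/p = (1/p)*α by ring, ENNReal.rpow_mul, hGeq, hKeq,
      ENNReal.ofReal_rpow_of_pos hg0, ENNReal.ofReal_rpow_of_pos hk0,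
      ← ENNReal.ofReal_mul (by positivity)]
  calc ∫⁻ v, h v ≤ ENNReal.ofReal g * (ENNReal.ofReal (R^N) * B) ^ (1/q) +
      (ENNReal.ofReal (R^2))⁻¹ * K := key
    _ = ENNReal.ofReal (g ^ α * k ^ β) * B ^ (1/q) + ENNReal.ofReal (g ^ α * k ^ β) := by
        rw [e1, e2]
    _ = (1 + B ^ (1/q)) * ENNReal.ofReal (g ^ α * k ^ β) := by ring
    _ = (1 + B ^ (1/q)) * (Gp ^ (α/p) * K ^ β) := by rw [e3]
    _ = (1 + B ^ (1/q)) * Gp ^ (α/p) * K ^ β := by ring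

set_option maxHeartbeats 2000000 in
/-- **Interpolation estimate for the macroscopic density** (Lemma 3.2 of Horst–Hunze).
For `f ∈ L^p(ℝ^N × ℝ^N)` nonnegative with finite kinetic energy, the density
`ρ(x) = ∫ f(x,v) dv` belongs to `L^r` with
`‖ρ‖_{L^r} ≤ (1 + (ω_N/N)^{1/p'}) ‖f‖_{L^p}^{2p'/(N+2p')} 𝒦(f)^{N/(N+2p')}`,
where `ω_N = N·vol(B(0,1))` is the surface area of the unit sphere in `ℝ^N`. -/
theorem density_Lr_estimate
    (N : ℕ) (hN : 2 ≤ N) (p q : ℝ) (hp : 1 < p) (hpq : 1 / p + 1 / q = 1)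
    (f : EuclideanSpace ℝ (Fin N) × EuclideanSpace ℝ (Fin N) → ℝ)
    (hf_nonneg : ∀ z, 0 ≤ f z)
    (hf_mem : MemLp f (ENNReal.ofReal p) volume)
    (hf_kin : Integrable (fun z => ‖z.2‖ ^ 2 * f z) volume)
    (ω : ℝ) (hω : ω = N * (volume (Metric.ball (0 : EuclideanSpace ℝ (Fin N)) 1)).toReal)
    (r : ℝ) (hr : r = (2 * p + N * (p - 1)) / (2 + N * (p - 1)))
    (ρ : EuclideanSpace ℝ (Fin N) → ℝ) (hρ : ∀ x, ρ x = ∫ v, f (x, v)) :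
    MemLp ρ (ENNReal.ofReal r) volume ∧
      eLpNorm ρ (ENNReal.ofReal r) volume ≤
        ENNReal.ofReal ((1 + (ω / N) ^ (1 / q)) *
          (eLpNorm f (ENNReal.ofReal p) volume).toReal ^ (2 * q / (N + 2 * q)) *
          (∫ z, ‖z.2‖ ^ 2 * f z) ^ ((N : ℝ) / (N + 2 * q))) := by
  -- basic exponent facts
  have hp0 : 0 < p := lt_trans one_pos hp
  have hp1 : p - 1 > 0 := by linarith
  have hq : q = p / (p - 1) := by
    have h1 : 1 / q = 1 - 1 / p := by linarith
    have hq0' : q ≠ 0 := by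
      intro h
      rw [h, div_zero] at h1
      have h3 : 1 / p < 1 := by rw [div_lt_one hp0]; exact hp
      linarith
    field_simp at h1 ⊢
    linarith
  have hq1 : 1 < q := by
    rw [hq, lt_div_iff₀ hp1]; linarith
  have hq0 : 0 < q := lt_trans one_pos hq1
  have hpq' : p.HolderConjugate q := Real.holderConjugate_iff.mpr ⟨hp, by rw [← one_div, ← one_div]; exact hpq⟩
  set α : ℝ := 2 * q / ((N:ℝ) + 2 * q) with hα
  set β : ℝ := (N:ℝ) / ((N:ℝ) + 2 * q) with hβ
  have hD : 0 < (N:ℝ) + 2 * q := by positivity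
  have hN0 : (0:ℝ) < N := by exact_mod_cast Nat.lt_of_lt_of_le Nat.zero_lt_one (le_trans one_le_two hN)
  have hα0 : 0 < α := by positivity
  have hβ0 : 0 < β := by positivity
  have hαβ : α + β = 1 := by rw [hα, hβ]; field_simp; ring
  have hr0 : 0 < r := by
    rw [hr]; apply div_pos <;> nlinarith
  -- the key real exponent identity : α*r/p + β*r = 1
  have hkey : α * r / p + β * r = 1 := by
    rw [hα, hβ, hr, hq]
    field_simp
    ring
  -- measurable representative
  obtain ⟨hf_aesm, hf_lp⟩ := hf_mem
  have hf'sm : StronglyMeasurable (hf_aesm.mk f) := hf_aesm.stronglyMeasurable_mk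
  have hff' : f =ᵐ[volume] hf_aesm.mk f := hf_aesm.ae_eq_mk
  set F : EuclideanSpace ℝ (Fin N) × EuclideanSpace ℝ (Fin N) → ℝ≥0∞ :=
    fun z => ENNReal.ofReal (hf_aesm.mk f z) with hF
  have hFmeas : Measurable F := ENNReal.measurable_ofReal.comp hf'sm.measurable
  have hFf : (fun z => ENNReal.ofReal (f z)) =ᵐ[volume] F :=
    hff'.fun_comp ENNReal.ofReal
  have hP0 : (ENNReal.ofReal p) ≠ 0 := (ENNReal.ofReal_pos.mpr hp0).ne'
  have hfP : eLpNorm f (ENNReal.ofReal p) volume = (∫⁻ z, F z ^ p) ^ (1/p) := by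
    rw [eLpNorm_eq_lintegral_rpow_enorm_toReal hP0 ENNReal.ofReal_ne_top,
      ENNReal.toReal_ofReal hp0.le]
    congr 1
    apply lintegral_congr_ae
    filter_upwards [hFf] with z hz
    rw [← hz, ← Real.enorm_eq_ofReal (hf_nonneg z)]
  have hIp_ne_top : ∫⁻ z, F z ^ p ≠ ⊤ := by
    intro hcon
    rw [hfP, hcon, ENNReal.top_rpow_of_pos (by positivity : (0:ℝ) < 1/p)] at hf_lp
    exact lt_irrefl _ hf_lp
  have hKin_eq : ∫⁻ z, ENNReal.ofReal (‖z.2‖^2) * F z =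
      ENNReal.ofReal (∫ z, ‖z.2‖^2 * f z) := by
    rw [MeasureTheory.ofReal_integral_eq_lintegral_ofReal hf_kin
      (Filter.Eventually.of_forall fun z => by
        have := hf_nonneg z; positivity)]
    apply lintegral_congr_ae
    filter_upwards [hFf] with z hz
    rw [ENNReal.ofReal_mul (by positivity), hz]
  have hKin_ne_top : ∫⁻ z, ENNReal.ofReal (‖z.2‖^2) * F z ≠ ⊤ := by
    rw [hKin_eq]; exact ENNReal.ofReal_ne_top
  set Gp : EuclideanSpace ℝ (Fin N) → ℝ≥0∞ := fun x => ∫⁻ v, F (x, v) ^ p with hGpd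
  set Kf : EuclideanSpace ℝ (Fin N) → ℝ≥0∞ :=
    fun x => ∫⁻ v, ENNReal.ofReal (‖v‖^2) * F (x, v) with hKfd
  set Φ : EuclideanSpace ℝ (Fin N) → ℝ≥0∞ := fun x => ∫⁻ v, F (x, v) with hΦd
  have hGpmeas : Measurable Gp := Measurable.lintegral_prod_right' (hFmeas.pow_const p)
  have hKprodmeas : Measurable fun z : EuclideanSpace ℝ (Fin N) × EuclideanSpace ℝ (Fin N) =>
      ENNReal.ofReal (‖z.2‖^2) * F z :=
    (ENNReal.measurable_ofReal.comp ((measurable_snd.norm).pow_const 2)).mul hFmeas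
  have hKfmeas : Measurable Kf := Measurable.lintegral_prod_right' hKprodmeas
  have hΦmeas : Measurable Φ := Measurable.lintegral_prod_right' hFmeas
  have hGpint : ∫⁻ x, Gp x = ∫⁻ z, F z ^ p := by
    rw [Measure.volume_eq_prod, lintegral_prod _ ((hFmeas.pow_const p).aemeasurable)]
  have hKfint : ∫⁻ x, Kf x = ∫⁻ z, ENNReal.ofReal (‖z.2‖^2) * F z := by
    rw [Measure.volume_eq_prod, lintegral_prod _ hKprodmeas.aemeasurable]
  set B := volume (Metric.ball (0 : EuclideanSpace ℝ (Fin N)) 1) with hBd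
  have hBtop : B ≠ ⊤ := measure_ball_lt_top.ne
  set C := 1 + B ^ (1/q) with hCd
  have hCtop : C ≠ ⊤ := by
    rw [hCd]
    exact ENNReal.add_ne_top.mpr ⟨ENNReal.one_ne_top,
      ENNReal.rpow_ne_top_of_nonneg (by positivity) hBtop⟩
  have hGp_ae : ∀ᵐ x, Gp x ≠ ⊤ := by
    filter_upwards [ae_lt_top hGpmeas (by rw [hGpint]; exact hIp_ne_top)] with x hx
    exact hx.ne
  have hKf_ae : ∀ᵐ x, Kf x ≠ ⊤ := by
    filter_upwards [ae_lt_top hKfmeas (by rw [hKfint]; exact hKin_ne_top)] with x hx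
    exact hx.ne
  have hΦae : ∀ᵐ x, Φ x ≤ C * Gp x ^ (α/p) * Kf x ^ β := by
    filter_upwards [hGp_ae, hKf_ae] with x h1 h2
    exact slice_bound (le_trans one_le_two hN) hpq' hα hβ (fun v => F (x, v))
      (hFmeas.comp measurable_prodMk_left) h1 h2
  have hΦ_fin : ∀ᵐ x, Φ x < ⊤ := by
    filter_upwards [hΦae, hGp_ae, hKf_ae] with x hx h1 h2
    apply lt_of_le_of_lt hx
    apply ENNReal.mul_lt_top
    · apply ENNReal.mul_lt_top
      · exact hCtop.lt_top
      · exact (ENNReal.rpow_ne_top_of_nonneg (by positivity) h1).lt_top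
    · exact (ENNReal.rpow_ne_top_of_nonneg hβ0.le h2).lt_top
  have hρ_nonneg : ∀ x, 0 ≤ ρ x := fun x => (hρ x) ▸ integral_nonneg fun v => hf_nonneg _
  have hslice_ae : ∀ᵐ x : EuclideanSpace ℝ (Fin N),
      (fun v => f (x, v)) =ᵐ[volume] (fun v => hf_aesm.mk f (x, v)) := by
    have h : ∀ᵐ z ∂((volume : Measure (EuclideanSpace ℝ (Fin N))).prod volume),
        f z = hf_aesm.mk f z := by
      rw [← Measure.volume_eq_prod]; exact hff'
    exact Measure.ae_ae_of_ae_prod h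
  have hρΦ : ∀ᵐ x, ENNReal.ofReal (ρ x) = Φ x := by
    filter_upwards [hslice_ae, hΦ_fin] with x hx hfin
    have hFslice : (fun v => ENNReal.ofReal (f (x, v))) =ᵐ[volume] fun v => F (x, v) :=
      hx.fun_comp ENNReal.ofReal
    have hsm : AEStronglyMeasurable (fun v => f (x, v)) volume :=
      ⟨fun v => hf_aesm.mk f (x, v), hf'sm.comp_measurable measurable_prodMk_left, hx⟩
    have hint : Integrable (fun v => f (x, v)) volume := by
      refine ⟨hsm, ?_⟩
      show (∫⁻ v, ‖f (x, v)‖ₑ) < ⊤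
      calc ∫⁻ v, ‖f (x, v)‖ₑ = ∫⁻ v, F (x, v) := by
            apply lintegral_congr_ae
            filter_upwards [hFslice] with v hv
            rw [Real.enorm_eq_ofReal (hf_nonneg _), hv]
        _ < ⊤ := hfin
    rw [hρ x, MeasureTheory.ofReal_integral_eq_lintegral_ofReal hint
      (Filter.Eventually.of_forall fun v => hf_nonneg _)]
    exact lintegral_congr_ae hFslice
  have hR0 : ENNReal.ofReal r ≠ 0 := (ENNReal.ofReal_pos.mpr hr0).ne'
  have hρnorm : eLpNorm ρ (ENNReal.ofReal r) volume = (∫⁻ x, Φ x ^ r) ^ (1/r) := by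
    rw [eLpNorm_eq_lintegral_rpow_enorm_toReal hR0 ENNReal.ofReal_ne_top,
      ENNReal.toReal_ofReal hr0.le]
    congr 1
    apply lintegral_congr_ae
    filter_upwards [hρΦ] with x hx
    rw [← hx, Real.enorm_eq_ofReal (hρ_nonneg x)]
  -- Hölder in x
  set s : ℝ := p / (α * r) with hs
  set t : ℝ := 1 / (β * r) with ht
  have hkey2 : α * r + β * r * p = p := by
    have h := hkey
    field_simp at h
    linarith
  have hst : s.HolderConjugate t := by
    rw [Real.holderConjugate_iff]; constructor
    · rw [hs, lt_div_iff₀ (by positivity), one_mul]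
      have hpos : 0 < β * r * p := by positivity
      linarith [hkey2]
    · rw [hs, ht, inv_div, inv_div, div_one]
      exact hkey
  have hHolder : ∫⁻ x, Gp x ^ (α*r/p) * Kf x ^ (β*r) ≤
      (∫⁻ x, Gp x) ^ (α*r/p) * (∫⁻ x, Kf x) ^ (β*r) := by
    have h := ENNReal.lintegral_mul_le_Lp_mul_Lq volume hst
      ((hGpmeas.pow_const (α*r/p)).aemeasurable) ((hKfmeas.pow_const (β*r)).aemeasurable)
    have e1 : ∀ x : EuclideanSpace ℝ (Fin N), (Gp x ^ (α*r/p)) ^ s = Gp x := by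
      intro x
      rw [← ENNReal.rpow_mul, show (α*r/p) * s = 1 by
        rw [hs]; field_simp, ENNReal.rpow_one]
    have e2 : ∀ x : EuclideanSpace ℝ (Fin N), (Kf x ^ (β*r)) ^ t = Kf x := by
      intro x
      rw [← ENNReal.rpow_mul, show (β*r) * t = 1 by
        rw [ht]; field_simp, ENNReal.rpow_one]
    have e3 : 1/s = α*r/p := by rw [hs, one_div, inv_div]
    have e4 : 1/t = β*r := by rw [ht, one_div, one_div, inv_inv]
    calc ∫⁻ x, Gp x ^ (α*r/p) * Kf x ^ (β*r)
        ≤ (∫⁻ x, (Gp x ^ (α*r/p)) ^ s) ^ (1/s) * (∫⁻ x, (Kf x ^ (β*r)) ^ t) ^ (1/t) := h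
      _ = (∫⁻ x, Gp x) ^ (α*r/p) * (∫⁻ x, Kf x) ^ (β*r) := by
          simp_rw [e1, e2, e3, e4]
  have hpoint : ∀ᵐ x, Φ x ^ r ≤ C ^ r * (Gp x ^ (α*r/p) * Kf x ^ (β*r)) := by
    filter_upwards [hΦae] with x hx
    calc Φ x ^ r ≤ (C * Gp x ^ (α/p) * Kf x ^ β) ^ r := ENNReal.rpow_le_rpow hx hr0.le
      _ = C ^ r * (Gp x ^ (α*r/p) * Kf x ^ (β*r)) := by
          rw [ENNReal.mul_rpow_of_nonneg _ _ hr0.le, ENNReal.mul_rpow_of_nonneg _ _ hr0.le,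
            ← ENNReal.rpow_mul, ← ENNReal.rpow_mul, mul_assoc,
            show α/p*r = α*r/p by ring]
  have hCr_top : C ^ r ≠ ⊤ := ENNReal.rpow_ne_top_of_nonneg hr0.le hCtop
  have hmain : ∫⁻ x, Φ x ^ r ≤ C ^ r * ((∫⁻ z, F z ^ p) ^ (α*r/p) *
      (ENNReal.ofReal (∫ z, ‖z.2‖^2 * f z)) ^ (β*r)) := by
    calc ∫⁻ x, Φ x ^ r ≤ ∫⁻ x, C ^ r * (Gp x ^ (α*r/p) * Kf x ^ (β*r)) :=
          lintegral_mono_ae hpoint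
      _ = C ^ r * ∫⁻ x, Gp x ^ (α*r/p) * Kf x ^ (β*r) := lintegral_const_mul' _ _ hCr_top
      _ ≤ C ^ r * ((∫⁻ x, Gp x) ^ (α*r/p) * (∫⁻ x, Kf x) ^ (β*r)) :=
          mul_le_mul_right hHolder _
      _ = C ^ r * ((∫⁻ z, F z ^ p) ^ (α*r/p) *
          (ENNReal.ofReal (∫ z, ‖z.2‖^2 * f z)) ^ (β*r)) := by
          rw [hGpint, hKfint, hKin_eq]
  have hfinalle : eLpNorm ρ (ENNReal.ofReal r) volume ≤
      C * ((∫⁻ z, F z ^ p) ^ (α/p) * (ENNReal.ofReal (∫ z, ‖z.2‖^2 * f z)) ^ β) := by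
    rw [hρnorm]
    calc (∫⁻ x, Φ x ^ r) ^ (1/r)
        ≤ (C ^ r * ((∫⁻ z, F z ^ p) ^ (α*r/p) *
            (ENNReal.ofReal (∫ z, ‖z.2‖^2 * f z)) ^ (β*r))) ^ (1/r) :=
          ENNReal.rpow_le_rpow hmain (by positivity)
      _ = C * ((∫⁻ z, F z ^ p) ^ (α/p) * (ENNReal.ofReal (∫ z, ‖z.2‖^2 * f z)) ^ β) := by
          rw [ENNReal.mul_rpow_of_nonneg _ _ (by positivity : (0:ℝ) ≤ 1/r),
            ENNReal.mul_rpow_of_nonneg _ _ (by positivity : (0:ℝ) ≤ 1/r),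
            ← ENNReal.rpow_mul, ← ENNReal.rpow_mul, ← ENNReal.rpow_mul,
            show r * (1/r) = 1 by field_simp, ENNReal.rpow_one,
            show α*r/p * (1/r) = α/p by field_simp,
            show β*r * (1/r) = β by field_simp]
  have hEtop : (∫⁻ z, F z ^ p) ^ (1/p) ≠ ⊤ :=
    ENNReal.rpow_ne_top_of_nonneg (by positivity) hIp_ne_top
  have h𝒦0 : 0 ≤ ∫ z, ‖z.2‖^2 * f z :=
    integral_nonneg fun z => mul_nonneg (pow_nonneg (norm_nonneg _) 2) (hf_nonneg z)
  have hωN : ω / N = B.toReal := by rw [hω]; field_simp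
  have hRHS : ENNReal.ofReal ((1 + (ω / N) ^ (1 / q)) *
      (eLpNorm f (ENNReal.ofReal p) volume).toReal ^ α *
      (∫ z, ‖z.2‖ ^ 2 * f z) ^ β) =
      C * ((∫⁻ z, F z ^ p) ^ (α/p) * (ENNReal.ofReal (∫ z, ‖z.2‖^2 * f z)) ^ β) := by
    rw [hωN]
    rw [ENNReal.ofReal_mul (by positivity), ENNReal.ofReal_mul (by positivity)]
    rw [show C * ((∫⁻ z, F z ^ p) ^ (α/p) * (ENNReal.ofReal (∫ z, ‖z.2‖^2 * f z)) ^ β) =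
      C * (∫⁻ z, F z ^ p) ^ (α/p) * (ENNReal.ofReal (∫ z, ‖z.2‖^2 * f z)) ^ β by ring]
    congr 1
    congr 1
    · rw [hCd, ENNReal.ofReal_add zero_le_one (by positivity), ENNReal.ofReal_one,
        ← ENNReal.ofReal_rpow_of_nonneg ENNReal.toReal_nonneg (by positivity),
        ENNReal.ofReal_toReal hBtop]
    · rw [hfP, ← ENNReal.ofReal_rpow_of_nonneg ENNReal.toReal_nonneg hα0.le,
        ENNReal.ofReal_toReal hEtop, ← ENNReal.rpow_mul,
        show (1/p)*α = α/p by ring]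
    · rw [← ENNReal.ofReal_rpow_of_nonneg h𝒦0 hβ0.le]
  have hρ_aesm : AEStronglyMeasurable ρ volume := by
    have h1 : AEStronglyMeasurable f
        ((volume : Measure (EuclideanSpace ℝ (Fin N))).prod volume) := by
      rw [← Measure.volume_eq_prod]; exact hf_aesm
    exact h1.integral_prod_right'.congr
      (Filter.Eventually.of_forall fun x => (hρ x).symm)
  constructor
  · refine ⟨hρ_aesm, ?_⟩
    calc eLpNorm ρ (ENNReal.ofReal r) volume
        ≤ C * ((∫⁻ z, F z ^ p) ^ (α/p) *
          (ENNReal.ofReal (∫ z, ‖z.2‖^2 * f z)) ^ β) := hfinalle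
      _ < ⊤ := by rw [← hRHS]; exact ENNReal.ofReal_lt_top
  · rw [hRHS]
    exact hfinalle
end

section
/- Let κ > 0 and let Γ = (Γ_k)_{k∈ℤ³₀} ∈ ℓ²(ℤ³₀) be radially symmetric with ‖Γ‖_{ℓ²} = 1. Define the 3×3 matrix-valued function on the torus 𝕋³: Q(x) = 6κ Σ_{k∈ℤ³₀} Γ_k² (k⊗k)/|k|² e^{2πi k·x}. Then: (a) Q(0) = 2κ I₃; (b) |Q(x)| ≤ 6κ for all x ∈ 𝕋³; (c) ‖Q‖_{L²(𝕋³)} ≤ 6κ ‖Γ‖_{ℓ∞}; and (d) for every r ∈ [1,∞), ‖Q‖_{L^r(𝕋³)} ≤ 6κ ‖Γ‖_{ℓ∞}^{min(1, 2/r)}. In particular, if (Γ^N)_N is a sequence with ‖Γ^N‖_{ℓ²} = 1 for all N and ‖Γ^N‖_{ℓ∞} → 0, then ‖Q_N‖_{L^r(𝕋³)} → 0 for every r ∈ [1,∞). -/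
open MeasureTheory Filter
open scoped ENNReal BigOperators Topology

/-- Nonzero lattice points of `ℤ³`. -/
abbrev Zlat3 : Type := {k : Fin 3 → ℤ // k ≠ 0}

/-- Squared Euclidean norm of a lattice point. -/
noncomputable def latNormSq (k : Fin 3 → ℤ) : ℝ := ∑ i, ((k i : ℝ)) ^ 2

/-- The unit cube `[0,1)³`, a fundamental domain of the torus `𝕋³`. -/
noncomputable def cube3 : Set (Fin 3 → ℝ) := Set.univ.pi fun _ => Set.Ico 0 1

/-- The matrix-valued covariance function
`Q(x) = 6κ Σ_{k∈ℤ³₀} Γ_k² (k⊗k)/|k|² e^{2πi k·x}`, viewed as a map into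
`ℂ^{3×3}` equipped with the (Frobenius) Euclidean norm. -/
noncomputable def Qcov (κ : ℝ) (Γ : Zlat3 → ℝ) (x : Fin 3 → ℝ) :
    EuclideanSpace ℂ (Fin 3 × Fin 3) :=
  WithLp.toLp 2 fun p : Fin 3 × Fin 3 => (6 * κ : ℂ) * ∑' k : Zlat3,
    (((Γ k) ^ 2 * ((k.1 p.1 : ℝ) * (k.1 p.2 : ℝ)) / latNormSq k.1 : ℝ) : ℂ) *
      Complex.exp (2 * Real.pi * Complex.I * (∑ i, (k.1 i : ℝ) * x i))

namespace CovAux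

/-- The character `e^{2πi k·x}`. -/
noncomputable def ek (k : Zlat3) (x : Fin 3 → ℝ) : ℂ :=
  Complex.exp (2 * Real.pi * Complex.I * (∑ i, (k.1 i : ℝ) * x i))

/-- Fourier coefficient entries. -/
noncomputable def acoef (Γ : Zlat3 → ℝ) (p : Fin 3 × Fin 3) (k : Zlat3) : ℝ :=
  (Γ k) ^ 2 * ((k.1 p.1 : ℝ) * (k.1 p.2 : ℝ)) / latNormSq k.1

lemma latNormSq_nonneg (k : Fin 3 → ℤ) : 0 ≤ latNormSq k :=
  Finset.sum_nonneg fun i _ => sq_nonneg _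

lemma latNormSq_pos (k : Zlat3) : 0 < latNormSq k.1 := by
  rcases Function.ne_iff.1 k.2 with ⟨i, hi⟩
  have h1 : (1 : ℝ) ≤ ((k.1 i : ℝ)) ^ 2 := by
    have : (1 : ℤ) ≤ (k.1 i) ^ 2 := by
      rcases lt_or_gt_of_ne (show k.1 i ≠ 0 by simpa using hi) with h | h
      · nlinarith
      · nlinarith
    have h2 : ((1:ℤ):ℝ) ≤ (((k.1 i)^2 : ℤ) : ℝ) := Int.cast_le.2 this
    push_cast at h2; linarith
  have : (1 : ℝ) ≤ latNormSq k.1 := by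
    refine le_trans h1 ?_
    exact Finset.single_le_sum (f := fun j => ((k.1 j : ℝ))^2)
      (fun j _ => sq_nonneg _) (Finset.mem_univ i)
  linarith

lemma sq_le_latNormSq (k : Zlat3) (i : Fin 3) : ((k.1 i : ℝ))^2 ≤ latNormSq k.1 :=
  Finset.single_le_sum (f := fun j => ((k.1 j : ℝ))^2) (fun j _ => sq_nonneg _)
    (Finset.mem_univ i)

lemma abs_mul_le_latNormSq (k : Zlat3) (p : Fin 3 × Fin 3) :
    |(k.1 p.1 : ℝ) * (k.1 p.2 : ℝ)| ≤ latNormSq k.1 := by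
  have h1 := sq_le_latNormSq k p.1
  have h2 := sq_le_latNormSq k p.2
  have hab : |(k.1 p.1 : ℝ) * (k.1 p.2 : ℝ)| ≤
      (((k.1 p.1 : ℝ))^2 + ((k.1 p.2 : ℝ))^2) / 2 := by
    rw [abs_mul]
    nlinarith [sq_nonneg (|(k.1 p.1:ℝ)| - |(k.1 p.2:ℝ)|), sq_abs ((k.1 p.1:ℝ)),
      sq_abs ((k.1 p.2:ℝ)), abs_nonneg ((k.1 p.1:ℝ)), abs_nonneg ((k.1 p.2:ℝ))]
  nlinarith [abs_nonneg ((k.1 p.1 : ℝ) * (k.1 p.2 : ℝ)),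
    abs_mul_abs_self ((k.1 p.1 : ℝ)) , sq_abs ((k.1 p.1:ℝ)),
    sq_nonneg (|(k.1 p.1:ℝ)| - |(k.1 p.2:ℝ)|), abs_mul ((k.1 p.1:ℝ)) ((k.1 p.2:ℝ))]

lemma abs_acoef_le (Γ : Zlat3 → ℝ) (p : Fin 3 × Fin 3) (k : Zlat3) :
    |acoef Γ p k| ≤ (Γ k) ^ 2 := by
  have hL := latNormSq_pos k
  have h := abs_mul_le_latNormSq k p
  rw [acoef, abs_div, abs_mul, abs_of_nonneg (sq_nonneg (Γ k)), abs_of_pos hL,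
    div_le_iff₀ hL]
  nlinarith [sq_nonneg (Γ k), abs_nonneg ((k.1 p.1 : ℝ) * (k.1 p.2 : ℝ))]

lemma norm_ek (k : Zlat3) (x : Fin 3 → ℝ) : ‖ek k x‖ = 1 := by
  rw [ek]
  have : (2 * (Real.pi:ℂ) * Complex.I * (∑ i, (k.1 i : ℝ) * x i)) =
      Complex.I * ((2 * Real.pi * ∑ i, (k.1 i : ℝ) * x i : ℝ) : ℂ) := by
    push_cast; ring
  rw [this, Complex.norm_exp]
  simp [Complex.mul_re]

/-- Constant coefficient vector in `ℂ^{3×3}`. -/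
noncomputable def avec (Γ : Zlat3 → ℝ) (k : Zlat3) : EuclideanSpace ℂ (Fin 3 × Fin 3) :=
  WithLp.toLp 2 fun p => ((acoef Γ p k : ℝ) : ℂ)

/-- The `k`-th term of the vector-valued series. -/
noncomputable def fvec (Γ : Zlat3 → ℝ) (k : Zlat3) (x : Fin 3 → ℝ) :
    EuclideanSpace ℂ (Fin 3 × Fin 3) :=
  ek k x • avec Γ k

lemma sum_sq_acoef (Γ : Zlat3 → ℝ) (k : Zlat3) :
    ∑ p : Fin 3 × Fin 3, (acoef Γ p k)^2 = ((Γ k)^2)^2 := by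
  have hL := latNormSq_pos k
  have key : ∑ p : Fin 3 × Fin 3, (((k.1 p.1 : ℝ)) * ((k.1 p.2 : ℝ)))^2
      = (latNormSq k.1)^2 := by
    rw [Fintype.sum_prod_type]
    have : ∀ i j : Fin 3, (((k.1 i : ℝ)) * ((k.1 j : ℝ)))^2
        = ((k.1 i : ℝ))^2 * ((k.1 j : ℝ))^2 := fun i j => by ring
    simp_rw [this, ← Finset.mul_sum, ← Finset.sum_mul]
    rw [latNormSq, sq]
  have : ∀ p : Fin 3 × Fin 3, (acoef Γ p k)^2
      = ((Γ k)^2)^2 / (latNormSq k.1)^2 * (((k.1 p.1 : ℝ)) * ((k.1 p.2 : ℝ)))^2 := by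
    intro p; rw [acoef]; field_simp
  simp_rw [this, ← Finset.mul_sum, key]
  field_simp

lemma norm_avec (Γ : Zlat3 → ℝ) (k : Zlat3) : ‖avec Γ k‖ = (Γ k)^2 := by
  rw [EuclideanSpace.norm_eq]
  have : ∀ p : Fin 3 × Fin 3, ‖((acoef Γ p k : ℝ) : ℂ)‖^2 = (acoef Γ p k)^2 := by
    intro p; rw [Complex.norm_real, Real.norm_eq_abs, sq_abs]
  simp_rw [avec, this, sum_sq_acoef]
  exact Real.sqrt_sq (sq_nonneg _)

lemma norm_fvec (Γ : Zlat3 → ℝ) (k : Zlat3) (x : Fin 3 → ℝ) :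
    ‖fvec Γ k x‖ = (Γ k)^2 := by
  rw [fvec, norm_smul, norm_ek, one_mul, norm_avec]

lemma summable_fvec {Γ : Zlat3 → ℝ} (hsum : Summable (fun k => (Γ k) ^ 2))
    (x : Fin 3 → ℝ) : Summable (fun k => fvec Γ k x) := by
  refine Summable.of_norm ?_
  simpa only [norm_fvec] using hsum

lemma summable_acoef {Γ : Zlat3 → ℝ} (hsum : Summable (fun k => (Γ k) ^ 2))
    (p : Fin 3 × Fin 3) : Summable (acoef Γ p) :=
  Summable.of_norm_bounded hsum (fun k => by
    rw [Real.norm_eq_abs]; exact abs_acoef_le Γ p k)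

lemma summable_u {Γ : Zlat3 → ℝ} (hsum : Summable (fun k => (Γ k) ^ 2))
    (p : Fin 3 × Fin 3) (x : Fin 3 → ℝ) :
    Summable (fun k => ((acoef Γ p k : ℝ) : ℂ) * ek k x) :=
  Summable.of_norm_bounded hsum (fun k => by
    rw [norm_mul, norm_ek, mul_one, Complex.norm_real, Real.norm_eq_abs]
    exact abs_acoef_le Γ p k)

lemma Qcov_apply (κ : ℝ) (Γ : Zlat3 → ℝ) (x : Fin 3 → ℝ) (p : Fin 3 × Fin 3) :
    Qcov κ Γ x p = (6 * κ : ℂ) * ∑' k : Zlat3, ((acoef Γ p k : ℝ) : ℂ) * ek k x := rfl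

lemma Qcov_eq {Γ : Zlat3 → ℝ} (hsum : Summable (fun k => (Γ k) ^ 2)) (κ : ℝ)
    (x : Fin 3 → ℝ) :
    Qcov κ Γ x = ((6 * κ : ℝ) : ℂ) • (∑' k, fvec Γ k x) := by
  refine PiLp.ext fun p => ?_
  have h1 : (∑' k, fvec Γ k x) p = ∑' k, fvec Γ k x p := by
    have := ((summable_fvec hsum x).hasSum.mapL
      (EuclideanSpace.proj (𝕜 := ℂ) p)).tsum_eq
    simpa using this.symm
  have h2 : ∀ k, fvec Γ k x p = ((acoef Γ p k : ℝ) : ℂ) * ek k x := by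
    intro k
    simp [fvec, avec, PiLp.smul_apply, smul_eq_mul, mul_comm]
  show Qcov κ Γ x p = ((6 * κ : ℝ) : ℂ) * (∑' k, fvec Γ k x) p
  rw [Qcov_apply, h1]
  simp_rw [h2]
  push_cast
  ring_nf

lemma norm_Qcov_le {Γ : Zlat3 → ℝ} (hsum : Summable (fun k => (Γ k) ^ 2))
    (hnorm : (∑' k : Zlat3, (Γ k) ^ 2) = 1) {κ : ℝ} (hκ : 0 < κ) (x : Fin 3 → ℝ) :
    ‖Qcov κ Γ x‖ ≤ 6 * κ := by
  rw [Qcov_eq hsum, norm_smul]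
  have h1 : ‖∑' k, fvec Γ k x‖ ≤ 1 := by
    refine le_trans (norm_tsum_le_tsum_norm ?_) ?_
    · simpa only [norm_fvec] using hsum
    · simp_rw [norm_fvec]; rw [hnorm]
  have h2 : ‖((6 * κ : ℝ) : ℂ)‖ = 6 * κ := by
    rw [Complex.norm_real, Real.norm_eq_abs, abs_of_pos (by linarith)]
  rw [h2]
  nlinarith [norm_nonneg (∑' k, fvec Γ k x)]

lemma continuous_Qcov {Γ : Zlat3 → ℝ} (hsum : Summable (fun k => (Γ k) ^ 2)) (κ : ℝ) :
    Continuous (Qcov κ Γ) := by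
  have hek : ∀ k : Zlat3, Continuous (fun x => ek k x) := by
    intro k
    apply Complex.continuous_exp.comp
    continuity
  have h : Continuous (fun x => ∑' k, fvec Γ k x) := by
    refine continuous_tsum (fun k => ((hek k).smul continuous_const)) hsum ?_
    intro k x; rw [norm_fvec]
  have : (Qcov κ Γ) = fun x => ((6 * κ : ℝ) : ℂ) • (∑' k, fvec Γ k x) := by
    funext x; rw [Qcov_eq hsum]
  rw [this]
  exact (continuous_const : Continuous fun _ : Fin 3 → ℝ => ((6 * κ : ℝ) : ℂ)).smul h

/-! ### Part (a): value at 0 -/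

lemma ek_zero (k : Zlat3) : ek k 0 = 1 := by
  simp [ek]

/-- Negating the `i`-th coordinate, as an equiv of `Zlat3`. -/
noncomputable def negAt (i : Fin 3) : Zlat3 ≃ Zlat3 := by
  have key : ∀ k : Fin 3 → ℤ, k ≠ 0 → Function.update k i (-(k i)) ≠ 0 := by
    intro k hk h0
    apply hk
    funext j
    by_cases hj : j = i
    · subst hj
      have := congrFun h0 j
      simp [Function.update] at this ⊢
      exact this
    · have := congrFun h0 j
      simpa [Function.update, hj] using this
  refine
    { toFun := fun k => ⟨Function.update k.1 i (-(k.1 i)), key k.1 k.2⟩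
      invFun := fun k => ⟨Function.update k.1 i (-(k.1 i)), key k.1 k.2⟩
      left_inv := ?_
      right_inv := ?_ } <;>
  · intro k
    apply Subtype.ext
    funext j
    by_cases hj : j = i
    · subst hj; simp [Function.update]
    · simp [Function.update, hj]

lemma negAt_apply_self (i : Fin 3) (k : Zlat3) : ((negAt i k).1 : Fin 3 → ℤ) i = -(k.1 i) := by
  simp [negAt, Function.update]

lemma negAt_apply_ne (i : Fin 3) (k : Zlat3) {j : Fin 3} (hj : j ≠ i) :
    ((negAt i k).1 : Fin 3 → ℤ) j = k.1 j := by
  simp [negAt, Function.update, hj]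

lemma latNormSq_negAt (i : Fin 3) (k : Zlat3) : latNormSq (negAt i k).1 = latNormSq k.1 := by
  rw [latNormSq, latNormSq]
  refine Finset.sum_congr rfl ?_
  intro j _
  by_cases hj : j = i
  · subst hj; rw [negAt_apply_self]; push_cast; ring
  · rw [negAt_apply_ne i k hj]

/-- Permuting coordinates, as an equiv of `Zlat3`. -/
noncomputable def permAt (τ : Equiv.Perm (Fin 3)) : Zlat3 ≃ Zlat3 := by
  have key : ∀ (σ : Equiv.Perm (Fin 3)) (k : Fin 3 → ℤ), k ≠ 0 → (k ∘ σ) ≠ 0 := by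
    intro σ k hk h0
    apply hk
    funext j
    have := congrFun h0 (σ.symm j)
    simpa using this
  refine
    { toFun := fun k => ⟨k.1 ∘ τ, key τ k.1 k.2⟩
      invFun := fun k => ⟨k.1 ∘ τ.symm, key τ.symm k.1 k.2⟩
      left_inv := ?_
      right_inv := ?_ } <;>
  · intro k
    apply Subtype.ext
    funext j
    simp

lemma latNormSq_permAt (τ : Equiv.Perm (Fin 3)) (k : Zlat3) :
    latNormSq (permAt τ k).1 = latNormSq k.1 := by
  rw [latNormSq, latNormSq]
  exact Equiv.sum_comp τ (fun j => ((k.1 j : ℝ))^2)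

lemma tsum_acoef_offdiag {Γ : Zlat3 → ℝ}
    (hrad : ∀ k k' : Zlat3, latNormSq k.1 = latNormSq k'.1 → Γ k = Γ k')
    {p : Fin 3 × Fin 3} (hp : p.1 ≠ p.2) :
    ∑' k, acoef Γ p k = 0 := by
  set σ := negAt p.1 with hσ
  have key : ∀ k, acoef Γ p (σ k) = - acoef Γ p k := by
    intro k
    have hΓ : Γ (σ k) = Γ k := hrad _ _ (latNormSq_negAt p.1 k)
    rw [acoef, acoef, hΓ, latNormSq_negAt, negAt_apply_self,
      negAt_apply_ne p.1 k (Ne.symm hp)]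
    push_cast
    ring
  have h1 : ∑' k, acoef Γ p (σ k) = ∑' k, acoef Γ p k := σ.tsum_eq (acoef Γ p)
  simp_rw [key] at h1
  rw [tsum_neg] at h1
  linarith

lemma tsum_acoef_diag {Γ : Zlat3 → ℝ} (hsum : Summable (fun k => (Γ k) ^ 2))
    (hnorm : (∑' k : Zlat3, (Γ k) ^ 2) = 1)
    (hrad : ∀ k k' : Zlat3, latNormSq k.1 = latNormSq k'.1 → Γ k = Γ k')
    (i : Fin 3) :
    ∑' k, acoef Γ (i, i) k = 1/3 := by
  have hii : ∀ i' j : Fin 3, (∑' k, acoef Γ (i', i') k) = ∑' k, acoef Γ (j, j) k := by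
    intro i' j
    set σ := permAt (Equiv.swap i' j) with hσ
    have key : ∀ k, acoef Γ (i', i') (σ k) = acoef Γ (j, j) k := by
      intro k
      have hΓ : Γ (σ k) = Γ k := hrad _ _ (latNormSq_permAt _ k)
      rw [acoef, acoef, hΓ, latNormSq_permAt]
      have : ((σ k).1 : Fin 3 → ℤ) i' = k.1 j := by
        simp [hσ, permAt]
      rw [this]
    have h1 : ∑' k, acoef Γ (i', i') (σ k) = ∑' k, acoef Γ (i', i') k :=
      σ.tsum_eq (acoef Γ (i', i'))
    simp_rw [key] at h1
    exact h1.symm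
  have hrow : ∀ k : Zlat3, ∑ j : Fin 3, acoef Γ (j, j) k = (Γ k)^2 := by
    intro k
    have hL := latNormSq_pos k
    have : ∀ j : Fin 3, acoef Γ (j, j) k = (Γ k)^2 / latNormSq k.1 * ((k.1 j : ℝ))^2 := by
      intro j
      rw [acoef]
      have : ((k.1 j : ℝ)) * ((k.1 j : ℝ)) = ((k.1 j : ℝ))^2 := by ring
      rw [this]
      field_simp
    simp_rw [this, ← Finset.mul_sum]
    rw [← latNormSq]
    field_simp
  have hswap : ∑ j : Fin 3, ∑' k, acoef Γ (j, j) k = ∑' k, ∑ j : Fin 3, acoef Γ (j, j) k :=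
    (Summable.tsum_finsetSum (fun j _ => summable_acoef hsum (j, j))).symm
  have hsum1 : ∑ j : Fin 3, ∑' k, acoef Γ (j, j) k = 1 := by
    rw [hswap]
    simp_rw [hrow]
    exact hnorm
  have h3 : (3 : ℝ) * ∑' k, acoef Γ (i, i) k = 1 := by
    rw [← hsum1, Fin.sum_univ_three, hii 0 i, hii 1 i, hii 2 i]
    ring
  linarith

lemma Qcov_zero {Γ : Zlat3 → ℝ} (hsum : Summable (fun k => (Γ k) ^ 2))
    (hnorm : (∑' k : Zlat3, (Γ k) ^ 2) = 1)
    (hrad : ∀ k k' : Zlat3, latNormSq k.1 = latNormSq k'.1 → Γ k = Γ k')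
    (κ : ℝ) (p : Fin 3 × Fin 3) :
    Qcov κ Γ 0 p = if p.1 = p.2 then ((2 * κ : ℝ) : ℂ) else 0 := by
  have h0 : Qcov κ Γ 0 p = (6 * κ : ℂ) * ((∑' k, acoef Γ p k : ℝ) : ℂ) := by
    rw [Qcov_apply]
    congr 1
    simp_rw [ek_zero, mul_one]
    have := ((summable_acoef hsum p).hasSum.mapL Complex.ofRealCLM).tsum_eq
    simpa [Complex.ofRealCLM_apply] using this
  by_cases hp : p.1 = p.2
  · obtain ⟨i, j⟩ := p
    simp only at hp
    subst hp
    rw [if_pos rfl, h0, tsum_acoef_diag hsum hnorm hrad]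
    push_cast
    ring
  · rw [if_neg hp, h0, tsum_acoef_offdiag hrad hp]
    simp

/-! ### Orthogonality of characters on the cube -/

lemma measurableSet_cube3 : MeasurableSet cube3 :=
  MeasurableSet.univ_pi (fun _ => measurableSet_Ico)

lemma volume_cube3 : volume cube3 = 1 := by
  rw [cube3, volume_pi_pi]
  simp [Real.volume_Ico]

instance : IsProbabilityMeasure (volume.restrict cube3) :=
  ⟨by rw [Measure.restrict_apply_univ, volume_cube3]⟩

lemma integral_exp_Ico (m : ℤ) :
    ∫ t in Set.Ico (0:ℝ) 1, Complex.exp ((2 * Real.pi * Complex.I * m) * t)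
      = if m = 0 then 1 else 0 := by
  have h1 : ∫ t in Set.Ico (0:ℝ) 1, Complex.exp ((2 * Real.pi * Complex.I * m) * t)
      = ∫ t in (0:ℝ)..1, Complex.exp ((2 * Real.pi * Complex.I * m) * t) := by
    rw [intervalIntegral.integral_of_le zero_le_one, integral_Ico_eq_integral_Ioo,
      integral_Ioc_eq_integral_Ioo]
  rw [h1]
  by_cases hm : m = 0
  · subst hm
    simp
  · rw [if_neg hm]
    have hc : (2 * (Real.pi:ℂ) * Complex.I * m) ≠ 0 := by
      apply mul_ne_zero
      apply mul_ne_zero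
      apply mul_ne_zero
      · norm_num
      · exact_mod_cast Real.pi_ne_zero
      · exact Complex.I_ne_zero
      · exact_mod_cast hm
    rw [integral_exp_mul_complex hc]
    have hone : (2 * (Real.pi:ℂ) * Complex.I * m) * ((1:ℝ):ℂ) = (m:ℂ) * (2 * Real.pi * Complex.I) := by
      push_cast; ring
    have hzero : (2 * (Real.pi:ℂ) * Complex.I * m) * ((0:ℝ):ℂ) = 0 := by
      push_cast; ring
    rw [hone, hzero, Complex.exp_int_mul_two_pi_mul_I, Complex.exp_zero]
    simp

lemma integral_cube_exp (m : Fin 3 → ℤ) :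
    (∫ x in cube3, Complex.exp (2 * Real.pi * Complex.I * (∑ i, (m i : ℝ) * x i)))
      = if m = 0 then 1 else 0 := by
  set g : Fin 3 → ℝ → ℂ := fun i t => Complex.exp ((2 * Real.pi * Complex.I * m i) * t)
    with hg
  have hprod : ∀ x : Fin 3 → ℝ,
      Complex.exp (2 * Real.pi * Complex.I * (∑ i, (m i : ℝ) * x i)) = ∏ i, g i (x i) := by
    intro x
    rw [hg]
    simp only
    rw [← Complex.exp_sum]
    congr 1
    push_cast
    rw [Finset.mul_sum]
    exact Finset.sum_congr rfl fun i _ => by ring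
  have hind : (Set.indicator cube3 fun x : Fin 3 → ℝ => ∏ i, g i (x i))
      = fun x => ∏ i, Set.indicator (Set.Ico (0:ℝ) 1) (g i) (x i) := by
    funext x
    by_cases hx : x ∈ cube3
    · rw [Set.indicator_of_mem hx]
      refine (Finset.prod_congr rfl fun i _ => ?_).symm
      have : x i ∈ Set.Ico (0:ℝ) 1 := by
        rw [cube3] at hx
        exact hx i (Set.mem_univ i)
      rw [Set.indicator_of_mem this]
    · rw [Set.indicator_of_notMem hx]
      have : ∃ i, x i ∉ Set.Ico (0:ℝ) 1 := by
        by_contra h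
        push_neg at h
        exact hx fun i _ => h i
      obtain ⟨i, hi⟩ := this
      refine (Finset.prod_eq_zero (Finset.mem_univ i) ?_).symm
      rw [Set.indicator_of_notMem hi]
  calc (∫ x in cube3, Complex.exp (2 * Real.pi * Complex.I * (∑ i, (m i : ℝ) * x i)))
      = ∫ x in cube3, ∏ i, g i (x i) := by simp_rw [hprod]
    _ = ∫ x : Fin 3 → ℝ, Set.indicator cube3 (fun x => ∏ i, g i (x i)) x := by
        rw [integral_indicator measurableSet_cube3]
    _ = ∫ x : Fin 3 → ℝ, ∏ i, Set.indicator (Set.Ico (0:ℝ) 1) (g i) (x i) := by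
        rw [hind]
    _ = ∏ i, ∫ t : ℝ, Set.indicator (Set.Ico (0:ℝ) 1) (g i) t :=
        integral_fintype_prod_eq_prod (fun i => Set.indicator (Set.Ico (0:ℝ) 1) (g i))
    _ = ∏ i, ∫ t in Set.Ico (0:ℝ) 1, g i t := by
        refine Finset.prod_congr rfl fun i _ => ?_
        rw [integral_indicator measurableSet_Ico]
    _ = ∏ i, if m i = 0 then (1:ℂ) else 0 := by
        refine Finset.prod_congr rfl fun i _ => integral_exp_Ico (m i)
    _ = if m = 0 then 1 else 0 := by
        by_cases hm : m = 0
        · rw [if_pos hm]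
          refine Finset.prod_eq_one fun i _ => ?_
          rw [if_pos (by rw [hm]; rfl)]
        · rw [if_neg hm]
          have : ∃ i, m i ≠ 0 := by
            by_contra h
            push_neg at h
            exact hm (funext h)
          obtain ⟨i, hi⟩ := this
          exact Finset.prod_eq_zero (Finset.mem_univ i) (if_neg hi)

lemma integral_ek_mul_conj (k k' : Zlat3) :
    (∫ x in cube3, ek k x * (starRingEnd ℂ) (ek k' x)) = if k = k' then 1 else 0 := by
  have hpt : ∀ x : Fin 3 → ℝ, ek k x * (starRingEnd ℂ) (ek k' x)
      = Complex.exp (2 * Real.pi * Complex.I * (∑ i, ((k.1 - k'.1) i : ℝ) * x i)) := by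
    intro x
    rw [ek, ek, ← Complex.exp_conj, ← Complex.exp_add]
    congr 1
    have hconj : (starRingEnd ℂ)
        (2 * (Real.pi:ℂ) * Complex.I * ((∑ i, (k'.1 i : ℝ) * x i : ℝ) : ℂ))
        = -(2 * (Real.pi:ℂ) * Complex.I * ((∑ i, (k'.1 i : ℝ) * x i : ℝ) : ℂ)) := by
      rw [map_mul, map_mul, map_mul, Complex.conj_ofReal, Complex.conj_ofReal, Complex.conj_I]
      have h2 : (starRingEnd ℂ) 2 = 2 := by
        rw [Complex.conj_eq_iff_im]
        norm_num
      rw [h2]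
      ring
    rw [hconj]
    have hsub : (∑ i, ((k.1 - k'.1) i : ℝ) * x i)
        = (∑ i, (k.1 i : ℝ) * x i) - ∑ i, (k'.1 i : ℝ) * x i := by
      rw [← Finset.sum_sub_distrib]
      refine Finset.sum_congr rfl fun i _ => ?_
      have : ((k.1 - k'.1) i : ℝ) = ((k.1 i : ℝ)) - ((k'.1 i : ℝ)) := by
        rw [Pi.sub_apply]
        push_cast
        ring
      rw [this]
      ring
    rw [hsub, Complex.ofReal_sub]
    ring
  simp_rw [hpt]
  rw [integral_cube_exp]
  have : (k.1 - k'.1 = 0) ↔ k = k' := by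
    rw [sub_eq_zero]
    exact ⟨fun h => Subtype.ext h, fun h => by rw [h]⟩
  by_cases hk : k = k'
  · rw [if_pos (this.2 hk), if_pos hk]
  · rw [if_neg (fun h => hk (this.1 h)), if_neg hk]

/-! ### Parseval on the cube -/

lemma sq_gamma_le_one {Γ : Zlat3 → ℝ} (hsum : Summable (fun k => (Γ k) ^ 2))
    (hnorm : (∑' k : Zlat3, (Γ k) ^ 2) = 1) (k : Zlat3) : (Γ k)^2 ≤ 1 := by
  rw [← hnorm]
  exact Summable.le_tsum hsum k (fun j _ => sq_nonneg _)

lemma summable_acoef_sq {Γ : Zlat3 → ℝ} (hsum : Summable (fun k => (Γ k) ^ 2))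
    (hnorm : (∑' k : Zlat3, (Γ k) ^ 2) = 1) (p : Fin 3 × Fin 3) :
    Summable (fun k => (acoef Γ p k)^2) := by
  refine Summable.of_norm_bounded hsum (fun k => ?_)
  rw [Real.norm_eq_abs, abs_of_nonneg (sq_nonneg _)]
  have h1 := abs_acoef_le Γ p k
  have h2 := sq_gamma_le_one hsum hnorm k
  nlinarith [abs_nonneg (acoef Γ p k), sq_abs (acoef Γ p k), sq_nonneg (Γ k)]

lemma integral_T_mul_conj {Γ : Zlat3 → ℝ} (hsum : Summable (fun k => (Γ k) ^ 2))
    (hnorm : (∑' k : Zlat3, (Γ k) ^ 2) = 1) (p : Fin 3 × Fin 3) :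
    (∫ x in cube3, (∑' k, ((acoef Γ p k : ℝ) : ℂ) * ek k x) *
        (starRingEnd ℂ) (∑' k, ((acoef Γ p k : ℝ) : ℂ) * ek k x))
      = ((∑' k, (acoef Γ p k)^2 : ℝ) : ℂ) := by
  set u : Zlat3 → (Fin 3 → ℝ) → ℂ := fun k x => ((acoef Γ p k : ℝ) : ℂ) * ek k x with hu
  have hnu : ∀ x, Summable (fun k => ‖u k x‖) := by
    intro x
    refine Summable.of_nonneg_of_le (fun k => norm_nonneg _) (fun k => ?_) hsum
    rw [hu]
    simp only
    rw [norm_mul, norm_ek, mul_one, Complex.norm_real, Real.norm_eq_abs]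
    exact abs_acoef_le Γ p k
  have hstar : ∀ x, (starRingEnd ℂ) (∑' k, u k x) = ∑' k, (starRingEnd ℂ) (u k x) := by
    intro x
    exact ((summable_u hsum p x).hasSum.star.tsum_eq).symm
  have hprod : ∀ x, (∑' k, u k x) * (starRingEnd ℂ) (∑' k, u k x)
      = ∑' z : Zlat3 × Zlat3, u z.1 x * (starRingEnd ℂ) (u z.2 x) := by
    intro x
    rw [hstar x]
    refine tsum_mul_tsum_of_summable_norm (hnu x) ?_
    have : ∀ k, ‖(starRingEnd ℂ) (u k x)‖ = ‖u k x‖ := fun k => by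
      rw [RCLike.norm_conj]
    simp_rw [this]
    exact hnu x
  have hprod' : ∀ x, (∑' k, ((acoef Γ p k : ℝ) : ℂ) * ek k x) *
      (starRingEnd ℂ) (∑' k, ((acoef Γ p k : ℝ) : ℂ) * ek k x)
        = ∑' z : Zlat3 × Zlat3, u z.1 x * (starRingEnd ℂ) (u z.2 x) := hprod
  simp_rw [hprod']
  -- interchange integral and tsum
  have hmeas : ∀ z : Zlat3 × Zlat3,
      AEStronglyMeasurable (fun x => u z.1 x * (starRingEnd ℂ) (u z.2 x))
        (volume.restrict cube3) := by
    intro z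
    have hcont : ∀ k : Zlat3, Continuous (fun x => u k x) := by
      intro k
      apply continuous_const.mul
      apply Complex.continuous_exp.comp
      continuity
    exact ((hcont z.1).mul (Complex.continuous_conj.comp (hcont z.2))).aestronglyMeasurable
  have hlint : ∑' z : Zlat3 × Zlat3,
      ∫⁻ x, ‖u z.1 x * (starRingEnd ℂ) (u z.2 x)‖₊ ∂(volume.restrict cube3) ≠ ⊤ := by
    have hb : ∀ z : Zlat3 × Zlat3,
        ∫⁻ x, ‖u z.1 x * (starRingEnd ℂ) (u z.2 x)‖₊ ∂(volume.restrict cube3)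
          ≤ ENNReal.ofReal ((Γ z.1)^2 * (Γ z.2)^2) := by
      intro z
      have hptb : ∀ x, (‖u z.1 x * (starRingEnd ℂ) (u z.2 x)‖₊ : ℝ≥0∞)
          ≤ ENNReal.ofReal ((Γ z.1)^2 * (Γ z.2)^2) := by
        intro x
        rw [← enorm_eq_nnnorm, ← ofReal_norm]
        apply ENNReal.ofReal_le_ofReal
        rw [norm_mul, RCLike.norm_conj]
        have h1 : ‖u z.1 x‖ ≤ (Γ z.1)^2 := by
          rw [hu]; simp only
          rw [norm_mul, norm_ek, mul_one, Complex.norm_real, Real.norm_eq_abs]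
          exact abs_acoef_le Γ p z.1
        have h2 : ‖u z.2 x‖ ≤ (Γ z.2)^2 := by
          rw [hu]; simp only
          rw [norm_mul, norm_ek, mul_one, Complex.norm_real, Real.norm_eq_abs]
          exact abs_acoef_le Γ p z.2
        exact mul_le_mul h1 h2 (norm_nonneg _) (sq_nonneg _)
      calc ∫⁻ x, ‖u z.1 x * (starRingEnd ℂ) (u z.2 x)‖₊ ∂(volume.restrict cube3)
          ≤ ∫⁻ _, ENNReal.ofReal ((Γ z.1)^2 * (Γ z.2)^2) ∂(volume.restrict cube3) :=
            lintegral_mono hptb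
        _ = ENNReal.ofReal ((Γ z.1)^2 * (Γ z.2)^2) := by
            rw [lintegral_const, measure_univ, mul_one]
    refine ne_of_lt (lt_of_le_of_lt (ENNReal.tsum_le_tsum hb) ?_)
    have : ∑' z : Zlat3 × Zlat3, ENNReal.ofReal ((Γ z.1)^2 * (Γ z.2)^2)
        = (∑' k, ENNReal.ofReal ((Γ k)^2)) * (∑' k, ENNReal.ofReal ((Γ k)^2)) := by
      rw [ENNReal.tsum_prod']
      simp_rw [ENNReal.ofReal_mul (sq_nonneg _), ENNReal.tsum_mul_left]
      rw [ENNReal.tsum_mul_right]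
    rw [this, ← ENNReal.ofReal_tsum_of_nonneg (fun k => sq_nonneg _) hsum, hnorm]
    simp
  rw [integral_tsum hmeas hlint]
  -- compute each integral
  have hint : ∀ z : Zlat3 × Zlat3,
      (∫ x in cube3, u z.1 x * (starRingEnd ℂ) (u z.2 x))
        = if z.1 = z.2 then ((acoef Γ p z.1 : ℝ) : ℂ)^2 else 0 := by
    intro z
    have hpt : ∀ x, u z.1 x * (starRingEnd ℂ) (u z.2 x)
        = (((acoef Γ p z.1 : ℝ) : ℂ) * ((acoef Γ p z.2 : ℝ) : ℂ)) *
            (ek z.1 x * (starRingEnd ℂ) (ek z.2 x)) := by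
      intro x
      rw [hu]; simp only
      rw [map_mul, Complex.conj_ofReal]
      ring
    simp_rw [hpt]
    rw [MeasureTheory.integral_const_mul, integral_ek_mul_conj]
    by_cases hz : z.1 = z.2
    · rw [if_pos hz, if_pos hz, mul_one, ← hz, sq]
    · rw [if_neg hz, if_neg hz, mul_zero]
  simp_rw [hint]
  -- extract the diagonal
  have hdiag : ∑' z : Zlat3 × Zlat3, (if z.1 = z.2 then ((acoef Γ p z.1 : ℝ) : ℂ)^2 else 0)
      = ∑' k : Zlat3, ((acoef Γ p k : ℝ) : ℂ)^2 := by
    have hinj : Function.Injective (fun k : Zlat3 => (k, k)) := by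
      intro a b h
      exact congrArg Prod.fst h
    have hsupp : Function.support
        (fun z : Zlat3 × Zlat3 => if z.1 = z.2 then ((acoef Γ p z.1 : ℝ) : ℂ)^2 else 0)
        ⊆ Set.range (fun k : Zlat3 => (k, k)) := by
      intro z hz
      by_cases h : z.1 = z.2
      · exact ⟨z.1, by rw [Prod.ext_iff]; exact ⟨rfl, h⟩⟩
      · exact absurd (if_neg h) hz
    have := Function.Injective.tsum_eq hinj hsupp
    rw [← this]
    simp
  rw [hdiag]
  have := ((summable_acoef_sq hsum hnorm p).hasSum.mapL Complex.ofRealCLM).tsum_eq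
  simp only [Complex.ofRealCLM_apply] at this
  rw [← this]
  refine tsum_congr fun k => ?_
  push_cast
  ring

lemma norm_Qcov_apply_le {Γ : Zlat3 → ℝ} (hsum : Summable (fun k => (Γ k) ^ 2))
    (hnorm : (∑' k : Zlat3, (Γ k) ^ 2) = 1) {κ : ℝ} (hκ : 0 < κ)
    (x : Fin 3 → ℝ) (p : Fin 3 × Fin 3) : ‖Qcov κ Γ x p‖ ≤ 6 * κ := by
  have h1 : ‖Qcov κ Γ x p‖^2 ≤ ‖Qcov κ Γ x‖^2 := by
    have := EuclideanSpace.norm_eq (Qcov κ Γ x)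
    have hsq : ‖Qcov κ Γ x‖^2 = ∑ q : Fin 3 × Fin 3, ‖Qcov κ Γ x q‖^2 := by
      rw [this, Real.sq_sqrt (Finset.sum_nonneg fun q _ => sq_nonneg _)]
    rw [hsq]
    exact Finset.single_le_sum (f := fun q => ‖Qcov κ Γ x q‖^2)
      (fun q _ => sq_nonneg _) (Finset.mem_univ p)
  have h2 := norm_Qcov_le hsum hnorm hκ x
  nlinarith [norm_nonneg (Qcov κ Γ x p), norm_nonneg (Qcov κ Γ x)]

lemma integrable_comp_sq {Γ : Zlat3 → ℝ} (hsum : Summable (fun k => (Γ k) ^ 2))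
    (hnorm : (∑' k : Zlat3, (Γ k) ^ 2) = 1) {κ : ℝ} (hκ : 0 < κ) (p : Fin 3 × Fin 3) :
    Integrable (fun x => ‖Qcov κ Γ x p‖^2) (volume.restrict cube3) := by
  have hcont : Continuous (fun x => ‖Qcov κ Γ x p‖^2) := by
    have h1 : Continuous (fun x => Qcov κ Γ x p) :=
      (EuclideanSpace.proj (𝕜 := ℂ) p).continuous.comp (continuous_Qcov hsum κ)
    exact (h1.norm).pow 2
  refine ⟨hcont.aestronglyMeasurable, ?_⟩
  refine HasFiniteIntegral.of_bounded (C := (6*κ)^2) ?_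
  refine Filter.Eventually.of_forall fun x => ?_
  rw [Real.norm_eq_abs, abs_of_nonneg (sq_nonneg _)]
  have := norm_Qcov_apply_le hsum hnorm hκ x p
  nlinarith [norm_nonneg (Qcov κ Γ x p)]

lemma integral_normsq_Qcov {Γ : Zlat3 → ℝ} (hsum : Summable (fun k => (Γ k) ^ 2))
    (hnorm : (∑' k : Zlat3, (Γ k) ^ 2) = 1) {κ : ℝ} (hκ : 0 < κ) :
    (∫ x in cube3, ‖Qcov κ Γ x‖^2) = (6*κ)^2 * ∑' k, ((Γ k)^2)^2 := by
  have hpt : ∀ x, ‖Qcov κ Γ x‖^2 = ∑ p : Fin 3 × Fin 3, ‖Qcov κ Γ x p‖^2 := by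
    intro x
    rw [EuclideanSpace.norm_eq, Real.sq_sqrt (Finset.sum_nonneg fun q _ => sq_nonneg _)]
  simp_rw [hpt]
  rw [integral_finset_sum _ (fun p _ => integrable_comp_sq hsum hnorm hκ p)]
  -- compute each component integral
  have hcomp : ∀ p : Fin 3 × Fin 3,
      (∫ x in cube3, ‖Qcov κ Γ x p‖^2) = (6*κ)^2 * ∑' k, (acoef Γ p k)^2 := by
    intro p
    have hQ : ∀ x, ‖Qcov κ Γ x p‖^2
        = (6*κ)^2 * ‖(∑' k, ((acoef Γ p k : ℝ) : ℂ) * ek k x)‖^2 := by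
      intro x
      rw [Qcov_apply]
      rw [norm_mul]
      have : ‖(6 * κ : ℂ)‖ = 6 * κ := by
        have : (6 * κ : ℂ) = ((6 * κ : ℝ) : ℂ) := by push_cast; ring
        rw [this, Complex.norm_real, Real.norm_eq_abs, abs_of_pos (by linarith)]
      rw [this, mul_pow]
    simp_rw [hQ]
    rw [MeasureTheory.integral_const_mul]
    congr 1
    -- ∫ ‖T‖² = ∑' a² via complexification
    have hTsq : ∀ z : ℂ, ((‖z‖^2 : ℝ) : ℂ) = z * (starRingEnd ℂ) z := by
      intro z
      rw [RCLike.mul_conj]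
      norm_cast
    have hofReal : ((∫ x in cube3, ‖(∑' k, ((acoef Γ p k : ℝ) : ℂ) * ek k x)‖^2 : ℝ) : ℂ)
        = ((∑' k, (acoef Γ p k)^2 : ℝ) : ℂ) := by
      have hio : ((∫ x in cube3, ‖(∑' k, ((acoef Γ p k : ℝ) : ℂ) * ek k x)‖^2 : ℝ) : ℂ)
          = ∫ x in cube3, ((‖(∑' k, ((acoef Γ p k : ℝ) : ℂ) * ek k x)‖^2 : ℝ) : ℂ) := by
        exact (integral_ofReal (𝕜 := ℂ)).symm
      rw [hio]
      simp_rw [hTsq]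
      exact integral_T_mul_conj hsum hnorm p
    exact_mod_cast hofReal
  simp_rw [hcomp]
  rw [← Finset.mul_sum]
  congr 1
  rw [← Summable.tsum_finsetSum (fun p _ => summable_acoef_sq hsum hnorm p)]
  exact tsum_congr fun k => sum_sq_acoef Γ k

/-! ### sup norm facts -/

instance : Nonempty Zlat3 :=
  ⟨⟨fun _ => 1, by
    intro h
    have := congrFun h 0
    simp at this⟩⟩

lemma abs_gamma_le_one {Γ : Zlat3 → ℝ} (hsum : Summable (fun k => (Γ k) ^ 2))
    (hnorm : (∑' k : Zlat3, (Γ k) ^ 2) = 1) (k : Zlat3) : |Γ k| ≤ 1 := by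
  have := sq_gamma_le_one hsum hnorm k
  nlinarith [abs_nonneg (Γ k), sq_abs (Γ k)]

lemma bddAbove_gamma {Γ : Zlat3 → ℝ} (hsum : Summable (fun k => (Γ k) ^ 2))
    (hnorm : (∑' k : Zlat3, (Γ k) ^ 2) = 1) :
    BddAbove (Set.range fun k => |Γ k|) := by
  refine ⟨1, ?_⟩
  rintro y ⟨k, rfl⟩
  exact abs_gamma_le_one hsum hnorm k

lemma abs_gamma_le_sup {Γ : Zlat3 → ℝ} (hsum : Summable (fun k => (Γ k) ^ 2))
    (hnorm : (∑' k : Zlat3, (Γ k) ^ 2) = 1) (k : Zlat3) :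
    |Γ k| ≤ ⨆ k' : Zlat3, |Γ k'| :=
  le_ciSup (bddAbove_gamma hsum hnorm) k

lemma sup_gamma_nonneg {Γ : Zlat3 → ℝ} (hsum : Summable (fun k => (Γ k) ^ 2))
    (hnorm : (∑' k : Zlat3, (Γ k) ^ 2) = 1) :
    0 ≤ ⨆ k' : Zlat3, |Γ k'| := by
  obtain ⟨k⟩ := (inferInstance : Nonempty Zlat3)
  exact le_trans (abs_nonneg (Γ k)) (abs_gamma_le_sup hsum hnorm k)

lemma tsum_quad_le {Γ : Zlat3 → ℝ} (hsum : Summable (fun k => (Γ k) ^ 2))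
    (hnorm : (∑' k : Zlat3, (Γ k) ^ 2) = 1) :
    (∑' k, ((Γ k)^2)^2) ≤ (⨆ k' : Zlat3, |Γ k'|)^2 := by
  set M := ⨆ k' : Zlat3, |Γ k'| with hM
  have hsummable : Summable (fun k => ((Γ k)^2)^2) := by
    refine Summable.of_nonneg_of_le (fun k => sq_nonneg _) (fun k => ?_) hsum
    have h1 := sq_gamma_le_one hsum hnorm k
    nlinarith [sq_nonneg (Γ k)]
  have hle : ∀ k, ((Γ k)^2)^2 ≤ M^2 * (Γ k)^2 := by
    intro k
    have h1 := abs_gamma_le_sup hsum hnorm k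
    have h2 := abs_nonneg (Γ k)
    have h3 : |Γ k| * |Γ k| ≤ M * M := mul_le_mul h1 h1 h2 (le_trans h2 h1)
    nlinarith [sq_abs (Γ k), sq_nonneg (Γ k), sq_nonneg (|Γ k|)]
  calc (∑' k, ((Γ k)^2)^2) ≤ ∑' k, M^2 * (Γ k)^2 :=
        Summable.tsum_le_tsum hle hsummable (hsum.mul_left _)
    _ = M^2 * ∑' k, (Γ k)^2 := tsum_mul_left
    _ = M^2 := by rw [hnorm, mul_one]

/-! ### eLpNorm bounds -/

lemma integrable_normsq_Qcov {Γ : Zlat3 → ℝ} (hsum : Summable (fun k => (Γ k) ^ 2))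
    (hnorm : (∑' k : Zlat3, (Γ k) ^ 2) = 1) {κ : ℝ} (hκ : 0 < κ) :
    Integrable (fun x => ‖Qcov κ Γ x‖^2) (volume.restrict cube3) := by
  refine ⟨(((continuous_Qcov hsum κ).norm).pow 2).aestronglyMeasurable, ?_⟩
  refine HasFiniteIntegral.of_bounded (C := (6*κ)^2) ?_
  refine Filter.Eventually.of_forall fun x => ?_
  rw [Real.norm_eq_abs, abs_of_nonneg (sq_nonneg _)]
  have := norm_Qcov_le hsum hnorm hκ x
  nlinarith [norm_nonneg (Qcov κ Γ x)]

lemma lintegral_two_Qcov {Γ : Zlat3 → ℝ} (hsum : Summable (fun k => (Γ k) ^ 2))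
    (hnorm : (∑' k : Zlat3, (Γ k) ^ 2) = 1) {κ : ℝ} (hκ : 0 < κ) :
    (∫⁻ x, (‖Qcov κ Γ x‖₊ : ℝ≥0∞) ^ (2:ℝ) ∂(volume.restrict cube3))
      ≤ ENNReal.ofReal ((6 * κ * (⨆ k : Zlat3, |Γ k|))^2) := by
  have h1 : ∀ x : Fin 3 → ℝ, (‖Qcov κ Γ x‖₊ : ℝ≥0∞) ^ (2:ℝ)
      = ENNReal.ofReal (‖Qcov κ Γ x‖^2) := by
    intro x
    rw [← enorm_eq_nnnorm, ← ofReal_norm,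
      ENNReal.ofReal_rpow_of_nonneg (norm_nonneg _) (by norm_num)]
    congr 1
    rw [show ((2:ℝ)) = ((2:ℕ):ℝ) by norm_num, Real.rpow_natCast]
  simp_rw [h1]
  rw [← ofReal_integral_eq_lintegral_ofReal (integrable_normsq_Qcov hsum hnorm hκ)
    (Filter.Eventually.of_forall fun x => sq_nonneg _)]
  apply ENNReal.ofReal_le_ofReal
  rw [integral_normsq_Qcov hsum hnorm hκ]
  have := tsum_quad_le hsum hnorm
  have hsup := sup_gamma_nonneg hsum hnorm
  nlinarith [sq_nonneg (⨆ k : Zlat3, |Γ k|)]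

lemma eLpNorm_two_Qcov_le {Γ : Zlat3 → ℝ} (hsum : Summable (fun k => (Γ k) ^ 2))
    (hnorm : (∑' k : Zlat3, (Γ k) ^ 2) = 1) {κ : ℝ} (hκ : 0 < κ) :
    eLpNorm (Qcov κ Γ) 2 (volume.restrict cube3)
      ≤ ENNReal.ofReal (6 * κ * (⨆ k : Zlat3, |Γ k|)) := by
  rw [eLpNorm_eq_lintegral_rpow_enorm_toReal (two_ne_zero) (ENNReal.ofNat_ne_top)]
  have htr : (2:ℝ≥0∞).toReal = (2:ℝ) := by simp
  rw [htr]
  set M := ⨆ k : Zlat3, |Γ k| with hM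
  have hsup := sup_gamma_nonneg hsum hnorm
  have hb : 0 ≤ 6 * κ * M := by positivity
  calc (∫⁻ x, (‖Qcov κ Γ x‖₊ : ℝ≥0∞) ^ (2:ℝ) ∂(volume.restrict cube3)) ^ (1/(2:ℝ))
      ≤ (ENNReal.ofReal ((6 * κ * M)^2)) ^ (1/(2:ℝ)) :=
        ENNReal.rpow_le_rpow (lintegral_two_Qcov hsum hnorm hκ) (by norm_num)
    _ = ENNReal.ofReal (6 * κ * M) := by
        rw [ENNReal.ofReal_pow hb, ← ENNReal.rpow_natCast (ENNReal.ofReal (6*κ*M)) 2,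
          ← ENNReal.rpow_mul]
        norm_num

lemma eLpNorm_r_Qcov_le {Γ : Zlat3 → ℝ} (hsum : Summable (fun k => (Γ k) ^ 2))
    (hnorm : (∑' k : Zlat3, (Γ k) ^ 2) = 1) {κ : ℝ} (hκ : 0 < κ) (r : ℝ) (hr : 1 ≤ r) :
    eLpNorm (Qcov κ Γ) (ENNReal.ofReal r) (volume.restrict cube3)
      ≤ ENNReal.ofReal (6 * κ * (⨆ k : Zlat3, |Γ k|) ^ (min 1 (2 / r))) := by
  set M := ⨆ k : Zlat3, |Γ k| with hM
  have hsup := sup_gamma_nonneg hsum hnorm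
  have hr0 : (0:ℝ) < r := lt_of_lt_of_le one_pos hr
  by_cases hr2 : r ≤ 2
  · have hmin : min 1 (2/r) = 1 := min_eq_left (by rw [le_div_iff₀ hr0]; linarith)
    rw [hmin, Real.rpow_one]
    refine le_trans (eLpNorm_le_eLpNorm_of_exponent_le ?_
      (continuous_Qcov hsum κ).aestronglyMeasurable) (eLpNorm_two_Qcov_le hsum hnorm hκ)
    calc ENNReal.ofReal r ≤ ENNReal.ofReal 2 := ENNReal.ofReal_le_ofReal hr2
      _ = 2 := by
        rw [show ((2:ℝ)) = ((2:ℕ):ℝ) by norm_num, ENNReal.ofReal_natCast]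
        norm_num
  · push_neg at hr2
    have hmin : min 1 (2/r) = 2/r := min_eq_right (by rw [div_le_one hr0]; linarith)
    rw [hmin]
    have hofr0 : ENNReal.ofReal r ≠ 0 := by
      simp only [ne_eq, ENNReal.ofReal_eq_zero, not_le]
      exact hr0
    rw [eLpNorm_eq_lintegral_rpow_enorm_toReal hofr0 ENNReal.ofReal_ne_top,
      ENNReal.toReal_ofReal (le_of_lt hr0)]
    set A := ENNReal.ofReal (6*κ) with hA
    set B := ENNReal.ofReal M with hB
    have hpt : ∀ x, (‖Qcov κ Γ x‖₊ : ℝ≥0∞) ^ r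
        ≤ A ^ (r - 2) * (‖Qcov κ Γ x‖₊ : ℝ≥0∞) ^ (2:ℝ) := by
      intro x
      have hsplit : (‖Qcov κ Γ x‖₊ : ℝ≥0∞) ^ r
          = (‖Qcov κ Γ x‖₊ : ℝ≥0∞) ^ (r - 2) * (‖Qcov κ Γ x‖₊ : ℝ≥0∞) ^ (2:ℝ) := by
        rw [← ENNReal.rpow_add_of_nonneg (r-2) 2 (by linarith) (by norm_num)]
        norm_num
      rw [hsplit]
      refine mul_le_mul_left ?_ _
      refine ENNReal.rpow_le_rpow ?_ (by linarith)
      rw [← enorm_eq_nnnorm, ← ofReal_norm, hA]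
      exact ENNReal.ofReal_le_ofReal (norm_Qcov_le hsum hnorm hκ x)
    have hAne : A ^ (r-2) ≠ ⊤ := by
      rw [hA]
      exact ENNReal.rpow_ne_top_of_nonneg (by linarith) ENNReal.ofReal_ne_top
    calc (∫⁻ x, (‖Qcov κ Γ x‖₊ : ℝ≥0∞) ^ r ∂(volume.restrict cube3)) ^ (1/r)
        ≤ (∫⁻ x, A ^ (r-2) * (‖Qcov κ Γ x‖₊ : ℝ≥0∞) ^ (2:ℝ) ∂(volume.restrict cube3))
            ^ (1/r) :=
          ENNReal.rpow_le_rpow (lintegral_mono hpt) (by positivity)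
      _ = (A ^ (r-2) * ∫⁻ x, (‖Qcov κ Γ x‖₊ : ℝ≥0∞) ^ (2:ℝ) ∂(volume.restrict cube3))
            ^ (1/r) := by
          rw [lintegral_const_mul' _ _ hAne]
      _ ≤ (A ^ (r-2) * ENNReal.ofReal ((6*κ*M)^2)) ^ (1/r) :=
          ENNReal.rpow_le_rpow
            (mul_le_mul_right (lintegral_two_Qcov hsum hnorm hκ) _) (by positivity)
      _ = (A ^ r * B ^ (2:ℝ)) ^ (1/r) := by
          congr 1
          have h2 : ENNReal.ofReal ((6*κ*M)^2) = A ^ (2:ℝ) * B ^ (2:ℝ) := by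
            have : (6*κ*M)^2 = (6*κ)^2 * M^2 := by ring
            rw [this, ENNReal.ofReal_mul (by positivity), hA, hB,
              ENNReal.ofReal_pow (by positivity), ENNReal.ofReal_pow hsup,
              ← ENNReal.rpow_natCast (ENNReal.ofReal (6*κ)) 2,
              ← ENNReal.rpow_natCast (ENNReal.ofReal M) 2]
            norm_num
          rw [h2, ← mul_assoc, ← ENNReal.rpow_add_of_nonneg (r-2) 2 (by linarith) (by norm_num)]
          norm_num
      _ = A * B ^ (2/r) := by
          rw [ENNReal.mul_rpow_of_nonneg _ _ (by positivity), ← ENNReal.rpow_mul,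
            ← ENNReal.rpow_mul]
          have h1 : r * (1/r) = 1 := by field_simp
          have h2 : (2:ℝ) * (1/r) = 2/r := by ring
          rw [h1, h2, ENNReal.rpow_one]
      _ = ENNReal.ofReal (6 * κ * M ^ (2/r)) := by
          rw [ENNReal.ofReal_mul (by positivity), hA, hB]
          congr 1
          rcases eq_or_lt_of_le hsup with h0 | h0
          · have hM0 : M = 0 := h0.symm
            rw [hM0, ENNReal.ofReal_zero, ENNReal.zero_rpow_of_pos (by positivity),
              Real.zero_rpow (by positivity), ENNReal.ofReal_zero]
          · have hM0 : 0 < M := h0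
            rw [ENNReal.ofReal_rpow_of_pos hM0]

end CovAux

open CovAux

/-- **Properties of the covariance function of the noise** (Example 2.4 of the paper).
For radially symmetric `Γ ∈ ℓ²(ℤ³₀)` with `‖Γ‖_{ℓ²} = 1`:
(a) `Q(0) = 2κ I₃`; (b) `|Q(x)| ≤ 6κ`; (c) `‖Q‖_{L²(𝕋³)} ≤ 6κ ‖Γ‖_{ℓ∞}`;
(d) `‖Q‖_{L^r(𝕋³)} ≤ 6κ ‖Γ‖_{ℓ∞}^{min(1,2/r)}` for `r ∈ [1,∞)`; and in particular, for a
sequence `Γ^N` with `‖Γ^N‖_{ℓ²} = 1` and `‖Γ^N‖_{ℓ∞} → 0`, `‖Q_N‖_{L^r(𝕋³)} → 0`. -/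
theorem covariance_function_properties (κ : ℝ) (hκ : 0 < κ) :
    (∀ Γ : Zlat3 → ℝ,
      Summable (fun k => (Γ k) ^ 2) →
      (∑' k : Zlat3, (Γ k) ^ 2) = 1 →
      (∀ k k' : Zlat3, latNormSq k.1 = latNormSq k'.1 → Γ k = Γ k') →
      (∀ p : Fin 3 × Fin 3,
          Qcov κ Γ 0 p = if p.1 = p.2 then ((2 * κ : ℝ) : ℂ) else 0) ∧
      (∀ x : Fin 3 → ℝ, ‖Qcov κ Γ x‖ ≤ 6 * κ) ∧
      eLpNorm (Qcov κ Γ) 2 (volume.restrict cube3) ≤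
        ENNReal.ofReal (6 * κ * (⨆ k : Zlat3, |Γ k|)) ∧
      (∀ r : ℝ, 1 ≤ r →
        eLpNorm (Qcov κ Γ) (ENNReal.ofReal r) (volume.restrict cube3) ≤
          ENNReal.ofReal (6 * κ * (⨆ k : Zlat3, |Γ k|) ^ (min 1 (2 / r))))) ∧
    (∀ ΓN : ℕ → Zlat3 → ℝ,
      (∀ N, Summable (fun k => (ΓN N k) ^ 2)) →
      (∀ N, (∑' k : Zlat3, (ΓN N k) ^ 2) = 1) →
      (∀ N, ∀ k k' : Zlat3, latNormSq k.1 = latNormSq k'.1 → ΓN N k = ΓN N k') →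
      Tendsto (fun N => ⨆ k : Zlat3, |ΓN N k|) atTop (𝓝 0) →
      ∀ r : ℝ, 1 ≤ r →
        Tendsto (fun N => eLpNorm (Qcov κ (ΓN N)) (ENNReal.ofReal r) (volume.restrict cube3))
          atTop (𝓝 0)) := by
  constructor
  · intro Γ hsum hnorm hrad
    exact ⟨Qcov_zero hsum hnorm hrad κ, norm_Qcov_le hsum hnorm hκ,
      eLpNorm_two_Qcov_le hsum hnorm hκ, fun r hr => eLpNorm_r_Qcov_le hsum hnorm hκ r hr⟩
  · intro ΓN hsumN hnormN hradN htend r hr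
    set m := min 1 (2/r) with hm
    have hr0 : (0:ℝ) < r := lt_of_lt_of_le one_pos hr
    have hm0 : 0 < m := lt_min one_pos (by positivity)
    have hupper : ∀ N, eLpNorm (Qcov κ (ΓN N)) (ENNReal.ofReal r) (volume.restrict cube3)
        ≤ ENNReal.ofReal (6 * κ * (⨆ k : Zlat3, |ΓN N k|) ^ m) := fun N =>
      eLpNorm_r_Qcov_le (hsumN N) (hnormN N) hκ r hr
    have htend2 : Tendsto (fun N => ENNReal.ofReal (6 * κ * (⨆ k : Zlat3, |ΓN N k|) ^ m))
        atTop (𝓝 0) := by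
      have h1 : Tendsto (fun s : ℝ => s ^ m) (𝓝 0) (𝓝 0) := by
        have hc : ContinuousAt (fun s : ℝ => s ^ m) 0 :=
          Real.continuousAt_rpow_const 0 m (Or.inr hm0.le)
        have h0 : (0:ℝ) ^ m = 0 := Real.zero_rpow (ne_of_gt hm0)
        simpa [h0] using hc.tendsto
      have h2 : Tendsto (fun N => (⨆ k : Zlat3, |ΓN N k|) ^ m) atTop (𝓝 0) :=
        h1.comp htend
      have h3 : Tendsto (fun N => 6 * κ * (⨆ k : Zlat3, |ΓN N k|) ^ m) atTop (𝓝 0) := by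
        have := h2.const_mul (6 * κ)
        simpa using this
      have h4 := (ENNReal.continuous_ofReal.tendsto 0).comp h3
      simpa [Function.comp_def] using h4
    exact tendsto_of_tendsto_of_tendsto_of_le_of_le tendsto_const_nhds htend2
      (fun N => zero_le) hupper
end

section
/- Let (Ω, ℱ, ℙ) be a probability space and let X : Ω → 𝕋³ be uniformly distributed, R : Ω → ℝ square-integrable with 𝔼[R²] = σ², and L : Ω → (0,∞) with probability density f on (0,∞), with X, R, L mutually independent. Let K ∈ L¹(𝕋³, ℝ³) and θ_ℓ ∈ L¹ ∩ L²(𝕋³) (measurable in (ℓ,x)), and define E(x) = R · (K ∗ θ_L)(x − X). Then for all bounded measurable φ, ψ : 𝕋³ → ℝ³ one has ⟨E, φ⟩ = R · (θ_L^T ∗ K^T ∗ φ)(X), and consequently 𝔼[⟨E, φ⟩ ⟨E, ψ⟩] = σ² ∫_0^∞ ∫_{𝕋³} (θ_ℓ^T ∗ K^T ∗ φ)(x) · (θ_ℓ^T ∗ K^T ∗ ψ)(x) dx f(ℓ) dℓ, provided the right-hand side is finite; here g^T(x) = g(−x) and for vector fields the convolution (K^T ∗ φ)(x) = ∫_{𝕋³}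 K(y−x)·φ(y) dy is scalar-valued. -/
open MeasureTheory ProbabilityTheory
open scoped BigOperators

/-- The three-dimensional torus `𝕋³ = (ℝ/ℤ)³` with its normalized Haar measure. -/
abbrev Torus3 : Type := Fin 3 → AddCircle (1 : ℝ)

/-- The scalar convolution `(K^T ∗ φ)(z) = ∫ K(u − z)·φ(u) du` on `𝕋³`. -/
noncomputable def convKT (K φ : Torus3 → Fin 3 → ℝ) (z : Torus3) : ℝ :=
  ∫ u, ∑ i, K (u - z) i * φ u i

/-- The convolution `(θ_ℓ^T ∗ g)(z) = ∫ θ_ℓ(u − z) g(u) du` on `𝕋³`. -/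
noncomputable def convThetaT (θ : ℝ → Torus3 → ℝ) (ℓ : ℝ) (g : Torus3 → ℝ) (z : Torus3) : ℝ :=
  ∫ u, θ ℓ (u - z) * g u

open scoped ENNReal NNReal

instance : IsProbabilityMeasure (volume : Measure Torus3) := by
  constructor
  rw [show (volume : Measure Torus3) = Measure.pi (fun _ => volume) from rfl]
  simp [Measure.pi_univ, AddCircle.measure_univ]

lemma rbf_part1 {K : Torus3 → Fin 3 → ℝ} (hK : Integrable K volume)
    {θ0 : Torus3 → ℝ} (hθ0 : Integrable θ0 volume)
    {φ : Torus3 → Fin 3 → ℝ} (hφ : Measurable φ) {Cφ : ℝ} (hφb : ∀ x, ‖φ x‖ ≤ Cφ)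
    (a : Torus3) :
    (∫ x, ∑ i, (∫ y, θ0 y * K (x - a - y) i) * φ x i)
      = ∫ u, θ0 (u - a) * convKT K φ u := by
  have hKi : ∀ i, Integrable (fun v => K v i) volume := fun i =>
    (ContinuousLinearMap.proj (R := ℝ) (φ := fun _ : Fin 3 => ℝ) i).integrable_comp hK
  have hKia : ∀ i, Integrable (fun v => K (v - a) i) volume := fun i => (hKi i).comp_sub_right a
  have hconv : ∀ i, Integrable
      (fun p : Torus3 × Torus3 => θ0 p.2 * K (p.1 - p.2 - a) i) (volume.prod volume) := by
    intro i
    have := MeasureTheory.Integrable.convolution_integrand (ContinuousLinearMap.mul ℝ ℝ)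
      hθ0 (hKia i)
    simpa using this
  have hφi : ∀ x (i : Fin 3), ‖φ x i‖ ≤ Cφ := fun x i =>
    (norm_le_pi_norm (φ x) i).trans (hφb x)
  have hF : ∀ i : Fin 3, Integrable
      (fun p : Torus3 × Torus3 => φ p.1 i * (θ0 p.2 * K (p.1 - p.2 - a) i))
      (volume.prod volume) := fun i =>
    (hconv i).bdd_mul (((measurable_pi_apply i).comp (hφ.comp measurable_fst)).aestronglyMeasurable)
      (Filter.Eventually.of_forall fun p => hφi p.1 i)
  have hFsum : Integrable
      (fun p : Torus3 × Torus3 => ∑ i, φ p.1 i * (θ0 p.2 * K (p.1 - p.2 - a) i))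
      (volume.prod volume) := integrable_finset_sum _ (fun i _ => hF i)
  have haei : ∀ᵐ x ∂(volume : Measure Torus3), ∀ i : Fin 3,
      Integrable (fun y => θ0 y * K (x - y - a) i) volume := by
    rw [ae_all_iff]
    exact fun i => (hconv i).prod_right_ae
  have step1 : (fun x => ∑ i, (∫ y, θ0 y * K (x - a - y) i) * φ x i)
      =ᵐ[volume] (fun x => ∫ y, ∑ i, φ x i * (θ0 y * K (x - y - a) i)) := by
    filter_upwards [haei] with x hx
    rw [integral_finset_sum _ (fun i _ => ((hx i).const_mul (φ x i)))]
    refine Finset.sum_congr rfl fun i _ => ?_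
    have hxy : (fun y => θ0 y * K (x - a - y) i) = (fun y => θ0 y * K (x - y - a) i) := by
      funext y; rw [sub_right_comm]
    rw [hxy, integral_const_mul]
    ring
  calc (∫ x, ∑ i, (∫ y, θ0 y * K (x - a - y) i) * φ x i)
      = ∫ x, ∫ y, ∑ i, φ x i * (θ0 y * K (x - y - a) i) := integral_congr_ae step1
    _ = ∫ y, ∫ x, ∑ i, φ x i * (θ0 y * K (x - y - a) i) := by
        apply integral_integral_swap
        exact hFsum
    _ = ∫ y, θ0 y * convKT K φ (y + a) := by
        refine integral_congr_ae (Filter.Eventually.of_forall fun y => ?_)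
        dsimp only
        have h1 : ∫ x, ∑ i, φ x i * (θ0 y * K (x - y - a) i)
            = ∫ x, θ0 y * ∑ i, K (x - (y + a)) i * φ x i := by
          refine integral_congr_ae (Filter.Eventually.of_forall fun x => ?_)
          simp only [Finset.mul_sum]
          refine Finset.sum_congr rfl fun i _ => ?_
          rw [← sub_sub, sub_right_comm]
          ring
        rw [h1, integral_const_mul]
        rfl
    _ = ∫ u, θ0 (u - a) * convKT K φ u := by
        rw [← integral_add_right_eq_self (fun u => θ0 (u - a) * convKT K φ u) a]
        simp

lemma convKT_meas {K φ : Torus3 → Fin 3 → ℝ} (hK : Integrable K volume) (hφ : Measurable φ) :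
    Measurable (convKT K φ) := by
  obtain ⟨K', hK'm, hK'ae⟩ : ∃ K' : Torus3 → Fin 3 → ℝ,
      StronglyMeasurable K' ∧ K =ᵐ[volume] K' :=
    ⟨hK.1.mk K, hK.1.stronglyMeasurable_mk, hK.1.ae_eq_mk⟩
  have hcongr : convKT K φ = convKT K' φ := by
    funext u
    refine integral_congr_ae ?_
    have h := ((measurePreserving_sub_right (volume : Measure Torus3)
      u).quasiMeasurePreserving).ae_eq_comp hK'ae
    filter_upwards [h] with v hv
    simp only [Function.comp] at hv
    exact Finset.sum_congr rfl fun i _ => by rw [hv]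
  rw [hcongr]
  have hsm : StronglyMeasurable fun q : Torus3 × Torus3 => ∑ i, K' (q.2 - q.1) i * φ q.2 i := by
    apply Measurable.stronglyMeasurable
    apply Finset.measurable_sum
    intro i _
    exact ((measurable_pi_apply i).comp
        (hK'm.measurable.comp (measurable_snd.sub measurable_fst))).mul
      ((measurable_pi_apply i).comp (hφ.comp measurable_snd))
  exact (hsm.integral_prod_right').measurable

lemma convThetaT_meas {θ : ℝ → Torus3 → ℝ} (hθ : Measurable (Function.uncurry θ))
    {c : Torus3 → ℝ} (hc : Measurable c) :
    Measurable (fun p : ℝ × Torus3 => convThetaT θ p.1 c p.2) := by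
  have hsm : StronglyMeasurable fun q : (ℝ × Torus3) × Torus3 =>
      θ q.1.1 (q.2 - q.1.2) * c q.2 := by
    apply Measurable.stronglyMeasurable
    exact (hθ.comp ((measurable_fst.fst).prodMk (measurable_snd.sub measurable_fst.snd))).mul
      (hc.comp measurable_snd)
  exact (hsm.integral_prod_right').measurable

lemma withDensity_fst_prod {w : ℝ → ℝ≥0∞} (hw : Measurable w)
    (hfin : IsFiniteMeasure ((volume : Measure ℝ).withDensity w)) :
    ((volume : Measure ℝ).withDensity w).prod (volume : Measure Torus3)
      = (((volume : Measure ℝ)).prod (volume : Measure Torus3)).withDensity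
          (fun p => w p.1) := by
  haveI := hfin
  refine Measure.prod_eq fun s t hs ht => ?_
  rw [withDensity_apply _ (hs.prod ht), ← Measure.prod_restrict s t,
    lintegral_prod (fun p : ℝ × Torus3 => w p.1) ((hw.comp measurable_fst).aemeasurable)]
  simp only [lintegral_const, Measure.restrict_apply_univ]
  rw [lintegral_mul_const _ hw, withDensity_apply _ hs]

lemma rbf_D_ae_zero {w g : ℝ → ℝ≥0∞} (hle : g ≤ w)
    (hlint : ∫⁻ l, (w l - g l) = 0)
    {H : ℝ × Torus3 → ℝ} (hH : Measurable H)
    {D : ℝ × Torus3 → ℝ}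
    (hD : AEStronglyMeasurable D ((volume : Measure ℝ).prod (volume : Measure Torus3)))
    (hDeq : ∀ p, D p = (w p.1 - g p.1).toReal * H p) :
    D =ᵐ[(volume : Measure ℝ).prod (volume : Measure Torus3)] 0 := by
  set μ2 := (volume : Measure ℝ).prod (volume : Measure Torus3) with hμ2
  have hinner : ∀ (t : ℝ), 0 < t → ∀ s : Set ℝ, MeasurableSet s →
      (∀ l ∈ s, ENNReal.ofReal t ≤ w l - g l) → volume s = 0 := by
    intro t ht s hs hsub
    have hmono : ∫⁻ l, s.indicator (fun _ => ENNReal.ofReal t) l ≤ ∫⁻ l, (w l - g l) :=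
      lintegral_mono fun l => by
        by_cases hl : l ∈ s
        · simpa [Set.indicator_of_mem hl] using hsub l hl
        · simp [Set.indicator_of_notMem hl]
    rw [hlint, lintegral_indicator_const hs] at hmono
    have h0 : ENNReal.ofReal t * volume s = 0 := le_antisymm hmono zero_le
    rcases mul_eq_zero.mp h0 with h | h
    · exact absurd h (by simp [ENNReal.ofReal_eq_zero, not_le, ht])
    · exact h
  set Φ := hD.mk D with hΦdef
  have hΦm : Measurable Φ := hD.stronglyMeasurable_mk.measurable
  have hae : D =ᵐ[μ2] Φ := hD.ae_eq_mk
  suffices hΦ0 : Φ =ᵐ[μ2] 0 from hae.trans hΦ0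
  have haeae : ∀ᵐ l ∂(volume : Measure ℝ), ∀ᵐ x ∂(volume : Measure Torus3),
      D (l, x) = Φ (l, x) := Measure.ae_ae_of_ae_prod hae
  have hbadnull : volume {l : ℝ | ¬ ∀ᵐ x ∂(volume : Measure Torus3), D (l, x) = Φ (l, x)} = 0 :=
    ae_iff.mp haeae
  set N := toMeasurable volume
      {l : ℝ | ¬ ∀ᵐ x ∂(volume : Measure Torus3), D (l, x) = Φ (l, x)} with hNdef
  have hNnull : volume N = 0 := by rw [hNdef, measure_toMeasurable]; exact hbadnull
  have key : ∀ n m : ℕ,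
      μ2 ({p | 1/((m:ℝ)+1) ≤ |Φ p|} ∩ {p | |H p| ≤ (n:ℝ)+1}) = 0 := by
    intro n m
    set B := ({p | 1/((m:ℝ)+1) ≤ |Φ p|} ∩ {p | |H p| ≤ (n:ℝ)+1} : Set (ℝ × Torus3)) with hBdef
    have hBmeas : MeasurableSet B :=
      (measurableSet_le measurable_const hΦm.abs).inter
        (measurableSet_le hH.abs measurable_const)
    set t := 1/(((m:ℝ)+1)*((n:ℝ)+1)) with htdef
    have ht : 0 < t := by positivity
    have hσmeas : Measurable fun l => (volume : Measure Torus3) (Prod.mk l ⁻¹' B) :=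
      measurable_measure_prodMk_left hBmeas
    set M := ((fun l => (volume : Measure Torus3) (Prod.mk l ⁻¹' B)) ⁻¹' {0})ᶜ \ N with hMdef
    have hMmeas : MeasurableSet M :=
      ((hσmeas (measurableSet_singleton 0)).compl).diff (measurableSet_toMeasurable _ _)
    have hMsub : ∀ l ∈ M, ENNReal.ofReal t ≤ w l - g l := by
      intro l hl
      obtain ⟨hσ, hlN⟩ := hl
      have hσ' : (volume : Measure Torus3) (Prod.mk l ⁻¹' B) ≠ 0 := by
        simpa using hσ
      have hgood : ∀ᵐ x ∂(volume : Measure Torus3), D (l, x) = Φ (l, x) := by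
        by_contra hcon
        exact hlN (subset_toMeasurable _ _ hcon)
      have hdiff : (volume : Measure Torus3)
          ((Prod.mk l ⁻¹' B) \ {x | D (l,x) = Φ (l,x)}) = 0 :=
        measure_mono_null (fun x hx => hx.2) (ae_iff.mp hgood)
      have hne : (volume : Measure Torus3)
          ((Prod.mk l ⁻¹' B) ∩ {x | D (l,x) = Φ (l,x)}) ≠ 0 := by
        intro h0
        apply hσ'
        refine le_antisymm ?_ zero_le
        calc (volume : Measure Torus3) (Prod.mk l ⁻¹' B)
            ≤ _ + _ := measure_le_inter_add_diff _ _ {x | D (l,x) = Φ (l,x)}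
          _ = 0 := by rw [h0, hdiff, add_zero]
      obtain ⟨x, hxB, hxeq⟩ := nonempty_of_measure_ne_zero hne
      obtain ⟨hx1, hx2⟩ := hxB
      have habs : (1:ℝ)/((m:ℝ)+1) ≤ (w l - g l).toReal * |H (l,x)| := by
        calc (1:ℝ)/((m:ℝ)+1) ≤ |Φ (l,x)| := hx1
          _ = |D (l,x)| := by rw [hxeq]
          _ = (w l - g l).toReal * |H (l,x)| := by
              rw [hDeq (l,x), abs_mul, abs_of_nonneg ENNReal.toReal_nonneg]
      have hHx : |H (l,x)| ≤ (n:ℝ)+1 := hx2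
      have hTnn : (0:ℝ) ≤ (w l - g l).toReal := ENNReal.toReal_nonneg
      have htle : t ≤ (w l - g l).toReal := by
        by_contra hc
        push_neg at hc
        have h1 : (w l - g l).toReal * |H (l,x)| ≤ (w l - g l).toReal * ((n:ℝ)+1) := by
          nlinarith [abs_nonneg (H (l,x))]
        have h2 : (w l - g l).toReal * ((n:ℝ)+1) < t * ((n:ℝ)+1) := by nlinarith
        have h3 : t * ((n:ℝ)+1) = 1/((m:ℝ)+1) := by rw [htdef]; field_simp
        linarith
      exact ENNReal.ofReal_le_of_le_toReal htle
    have hMnull : volume M = 0 := hinner t ht M hMmeas hMsub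
    have hslice : (fun l => (volume : Measure Torus3) (Prod.mk l ⁻¹' B)) =ᵐ[volume] 0 := by
      rw [Filter.EventuallyEq, ae_iff]
      refine measure_mono_null (t := M ∪ N) (fun l hl => ?_) ?_
      · show l ∈ M ∪ N
        by_cases hlN : l ∈ N
        · exact Or.inr hlN
        · refine Or.inl ⟨?_, hlN⟩
          simp only [Set.mem_compl_iff, Set.mem_preimage, Set.mem_singleton_iff]
          simpa using hl
      · refine le_antisymm ((measure_union_le _ _).trans ?_) zero_le
        rw [hMnull, hNnull, add_zero]
    rw [hμ2, Measure.prod_apply hBmeas, lintegral_congr_ae hslice]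
    simp
  rw [Filter.EventuallyEq, ae_iff]
  have hcover : {p : ℝ × Torus3 | ¬ Φ p = (0 : (ℝ × Torus3) → ℝ) p} ⊆
      ⋃ (n : ℕ), ⋃ (m : ℕ),
        ({p | 1/((m:ℝ)+1) ≤ |Φ p|} ∩ {p | |H p| ≤ (n:ℝ)+1}) := by
    intro p hp
    have hp' : Φ p ≠ 0 := hp
    have hΦp : 0 < |Φ p| := abs_pos.mpr hp'
    obtain ⟨n, hn⟩ := exists_nat_ge (|H p|)
    obtain ⟨m, hm⟩ := exists_nat_ge (1/|Φ p|)
    simp only [Set.mem_iUnion]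
    refine ⟨n, m, ?_, hn.trans (by linarith)⟩
    show 1/((m:ℝ)+1) ≤ |Φ p|
    rw [div_le_iff₀ (by positivity)]
    have h1 : 1/|Φ p| ≤ (m:ℝ)+1 := hm.trans (by linarith)
    have h2 : (1:ℝ) = |Φ p| * (1/|Φ p|) := by field_simp
    nlinarith
  refine measure_mono_null hcover ?_
  exact measure_iUnion_null fun n => measure_iUnion_null fun m => key n m

/-- **Covariance of the random blob field** (second Lemma of Section 5.1).
With `X` uniform on `𝕋³`, `R` square-integrable with `𝔼[R²] = σ²`, `L` with density `f`
on `(0,∞)`, all mutually independent, and `E(x) = R (K ∗ θ_L)(x − X)`: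
(i) `⟨E, φ⟩ = R (θ_L^T ∗ K^T ∗ φ)(X)` for bounded measurable `φ`; and
(ii) `𝔼[⟨E,φ⟩⟨E,ψ⟩] = σ² ∫₀^∞ ∫_{𝕋³} (θ_ℓ^T∗K^T∗φ)(x)(θ_ℓ^T∗K^T∗ψ)(x) dx f(ℓ) dℓ`,
provided the right-hand side is (absolutely) finite. -/
theorem random_blob_field_covariance
    {Ω : Type*} [MeasurableSpace Ω] (Pr : Measure Ω) [IsProbabilityMeasure Pr]
    (X : Ω → Torus3) (hXmeas : Measurable X)
    (hXunif : Measure.map X Pr = volume)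
    (R : Ω → ℝ) (hRmeas : Measurable R)
    (hR2 : Integrable (fun ω => (R ω) ^ 2) Pr)
    (σ2 : ℝ) (hσ2 : (∫ ω, (R ω) ^ 2 ∂Pr) = σ2)
    (L : Ω → ℝ) (hLmeas : Measurable L) (hLpos : ∀ ω, 0 < L ω)
    (f : ℝ → ℝ) (hf0 : ∀ ℓ, 0 ≤ f ℓ) (hfsupp : ∀ ℓ : ℝ, ℓ ≤ 0 → f ℓ = 0)
    (hLlaw : Measure.map L Pr = volume.withDensity fun ℓ => ENNReal.ofReal (f ℓ))
    (hRL : IndepFun R L Pr)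
    (hXRL : IndepFun X (fun ω => (R ω, L ω)) Pr)
    (K : Torus3 → Fin 3 → ℝ) (hK : Integrable K volume)
    (θ : ℝ → Torus3 → ℝ)
    (hθmeas : Measurable (Function.uncurry θ))
    (hθint : ∀ ℓ : ℝ, 0 < ℓ → Integrable (θ ℓ) volume)
    (hθL2 : ∀ ℓ : ℝ, 0 < ℓ → MemLp (θ ℓ) 2 volume)
    (φ ψ : Torus3 → Fin 3 → ℝ) (hφmeas : Measurable φ) (hψmeas : Measurable ψ)
    (Cφ : ℝ) (hφbdd : ∀ x, ‖φ x‖ ≤ Cφ) (Cψ : ℝ) (hψbdd : ∀ x, ‖ψ x‖ ≤ Cψ) :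
    (∀ ω : Ω,
      (∫ x, R ω * ∑ i, (∫ y, θ (L ω) y * K (x - X ω - y) i) * φ x i) =
        R ω * convThetaT θ (L ω) (convKT K φ) (X ω)) ∧
    (Integrable (fun p : ℝ × Torus3 =>
        f p.1 * (convThetaT θ p.1 (convKT K φ) p.2 * convThetaT θ p.1 (convKT K ψ) p.2))
        (volume.prod volume) →
      (∫ ω, (∫ x, R ω * ∑ i, (∫ y, θ (L ω) y * K (x - X ω - y) i) * φ x i) *
            (∫ x, R ω * ∑ i, (∫ y, θ (L ω) y * K (x - X ω - y) i) * ψ x i) ∂Pr) =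
        σ2 * ∫ ℓ : ℝ, f ℓ *
          ∫ x, convThetaT θ ℓ (convKT K φ) x * convThetaT θ ℓ (convKT K ψ) x) := by
  have hpart1 : ∀ (φ0 : Torus3 → Fin 3 → ℝ), Measurable φ0 → ∀ (C : ℝ), (∀ x, ‖φ0 x‖ ≤ C) →
      ∀ ω : Ω, (∫ x, R ω * ∑ i, (∫ y, θ (L ω) y * K (x - X ω - y) i) * φ0 x i)
        = R ω * convThetaT θ (L ω) (convKT K φ0) (X ω) := by
    intro φ0 hm C hb ω
    rw [integral_const_mul, rbf_part1 hK (hθint _ (hLpos ω)) hm hb (X ω)]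
    rfl
  refine ⟨hpart1 φ hφmeas Cφ hφbdd, ?_⟩
  intro Hint
  set Aφ : ℝ × Torus3 → ℝ := fun p => convThetaT θ p.1 (convKT K φ) p.2 with hAφdef
  set Aψ : ℝ × Torus3 → ℝ := fun p => convThetaT θ p.1 (convKT K ψ) p.2 with hAψdef
  have hAφm : Measurable Aφ := convThetaT_meas hθmeas (convKT_meas hK hφmeas)
  have hAψm : Measurable Aψ := convThetaT_meas hθmeas (convKT_meas hK hψmeas)
  set H : ℝ × Torus3 → ℝ := fun p => Aφ p * Aψ p with hHdef
  have hHm : Measurable H := hAφm.mul hAψm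
  have hrw : ∀ ω : Ω, (∫ x, R ω * ∑ i, (∫ y, θ (L ω) y * K (x - X ω - y) i) * φ x i) *
      (∫ x, R ω * ∑ i, (∫ y, θ (L ω) y * K (x - X ω - y) i) * ψ x i)
      = (R ω)^2 * H (L ω, X ω) := by
    intro ω
    rw [hpart1 φ hφmeas Cφ hφbdd ω, hpart1 ψ hψmeas Cψ hψbdd ω]
    simp only [hHdef, hAφdef, hAψdef]
    ring
  -- measures
  set μR := Measure.map R Pr with hμR
  set μL := Measure.map L Pr with hμL
  haveI : IsProbabilityMeasure μR := Measure.isProbabilityMeasure_map hRmeas.aemeasurable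
  haveI : IsProbabilityMeasure μL := Measure.isProbabilityMeasure_map hLmeas.aemeasurable
  have hmapRL : Measure.map (fun ω => (R ω, L ω)) Pr = μR.prod μL :=
    (indepFun_iff_map_prod_eq_prod_map_map hRmeas.aemeasurable hLmeas.aemeasurable).mp hRL
  have hTm : Measurable fun ω => (X ω, (R ω, L ω)) := hXmeas.prodMk (hRmeas.prodMk hLmeas)
  have hmapT : Measure.map (fun ω => (X ω, (R ω, L ω))) Pr
      = (volume : Measure Torus3).prod (μR.prod μL) := by
    have h := (indepFun_iff_map_prod_eq_prod_map_map hXmeas.aemeasurable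
      (hRmeas.prodMk hLmeas).aemeasurable).mp hXRL
    rw [h, hXunif, hmapRL]
  have hSm : Measurable fun p : Torus3 × (ℝ × ℝ) => (p.2.1, (p.2.2, p.1)) :=
    (measurable_snd.fst).prodMk ((measurable_snd.snd).prodMk measurable_fst)
  have hmapT' : Measure.map (fun ω => (R ω, (L ω, X ω))) Pr
      = μR.prod (μL.prod (volume : Measure Torus3)) := by
    have hcomp : (fun ω => (R ω, (L ω, X ω)))
        = (fun p : Torus3 × (ℝ × ℝ) => (p.2.1, (p.2.2, p.1)))
          ∘ (fun ω => (X ω, (R ω, L ω))) := rfl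
    rw [hcomp, ← Measure.map_map hSm hTm, hmapT]
    have hS2 : (fun p : Torus3 × (ℝ × ℝ) => (p.2.1, (p.2.2, p.1)))
        = (⇑(MeasurableEquiv.prodAssoc : ((ℝ × ℝ) × Torus3) ≃ᵐ (ℝ × (ℝ × Torus3))))
          ∘ Prod.swap := rfl
    rw [hS2, ← Measure.map_map (MeasurableEquiv.prodAssoc).measurable measurable_swap,
      Measure.prod_swap, (measurePreserving_prodAssoc μR μL volume).map_eq]
  -- bridging: the withDensity manipulation
  obtain ⟨g, hgm, hgle, hgeq⟩ := exists_measurable_le_withDensity_eq (volume : Measure ℝ)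
    (fun l => ENNReal.ofReal (f l))
  have hμLg : μL = (volume : Measure ℝ).withDensity g := hμL.trans (hLlaw.trans hgeq.symm)
  have hgfin : ∀ l, g l ≠ ∞ := fun l => ne_top_of_le_ne_top ENNReal.ofReal_ne_top (hgle l)
  haveI hfinwd : IsFiniteMeasure ((volume : Measure ℝ).withDensity g) := by
    rw [← hμLg]; infer_instance
  have hlg : ∫⁻ l, g l = 1 := by
    have h1 : ((volume : Measure ℝ).withDensity g) Set.univ = 1 := by
      rw [← hμLg]; exact measure_univ
    rwa [withDensity_apply _ MeasurableSet.univ, setLIntegral_univ] at h1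
  have hlw : ∫⁻ l, ENNReal.ofReal (f l) = 1 := by
    have h1 : ((volume : Measure ℝ).withDensity (fun l => ENNReal.ofReal (f l))) Set.univ = 1 := by
      rw [← hLlaw]
      have : IsProbabilityMeasure (Measure.map L Pr) :=
        Measure.isProbabilityMeasure_map hLmeas.aemeasurable
      exact measure_univ
    rwa [withDensity_apply _ MeasurableSet.univ, setLIntegral_univ] at h1
  have hlint : ∫⁻ l, (ENNReal.ofReal (f l) - g l) = 0 := by
    have hle' : (∫⁻ l, g l) + (∫⁻ l, (ENNReal.ofReal (f l) - g l)) ≤ 1 := by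
      refine le_trans (le_lintegral_add _ _) (le_of_eq ?_)
      calc ∫⁻ l, (g l + (ENNReal.ofReal (f l) - g l))
          = ∫⁻ l, ENNReal.ofReal (f l) :=
            lintegral_congr fun l => add_tsub_cancel_of_le (hgle l)
        _ = 1 := hlw
    rw [hlg] at hle'
    have h2 : (∫⁻ l, (ENNReal.ofReal (f l) - g l)) ≤ 0 :=
      (ENNReal.add_le_add_iff_left ENNReal.one_ne_top).mp (by simpa using hle')
    exact le_antisymm h2 zero_le
  have hE2 : ∫ q, H q ∂(μL.prod (volume : Measure Torus3))
      = ∫ q : ℝ × Torus3, (g q.1).toNNReal • H q ∂((volume : Measure ℝ).prod volume) := by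
    rw [hμLg, withDensity_fst_prod hgm hfinwd]
    have hcoe : (fun p : ℝ × Torus3 => g p.1)
        = fun p : ℝ × Torus3 => (((g p.1).toNNReal : ℝ≥0) : ℝ≥0∞) := by
      funext p; rw [ENNReal.coe_toNNReal (hgfin p.1)]
    rw [hcoe]
    exact integral_withDensity_eq_integral_smul (hgm.ennreal_toNNReal.comp measurable_fst) H
  have hDae : (fun p : ℝ × Torus3 => f p.1 * H p - (g p.1).toReal * H p)
      =ᵐ[(volume : Measure ℝ).prod (volume : Measure Torus3)] 0 := by
    refine rbf_D_ae_zero hgle hlint hHm ?_ ?_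
    · exact Hint.1.sub ((hgm.ennreal_toReal.comp measurable_fst).mul hHm).aestronglyMeasurable
    · intro p
      rw [ENNReal.toReal_sub_of_le (hgle p.1) ENNReal.ofReal_ne_top,
        ENNReal.toReal_ofReal (hf0 p.1)]
      ring
  have hE3 : ∫ q : ℝ × Torus3, (g q.1).toNNReal • H q ∂((volume : Measure ℝ).prod volume)
      = ∫ p : ℝ × Torus3, f p.1 * H p ∂((volume : Measure ℝ).prod volume) := by
    refine integral_congr_ae ?_
    filter_upwards [hDae] with p hp
    have hp' : f p.1 * H p - (g p.1).toReal * H p = 0 := hp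
    have h2 : (g p.1).toReal * H p = f p.1 * H p := by linarith
    calc (g p.1).toNNReal • H p = (g p.1).toReal * H p := by
          rw [NNReal.smul_def]; rfl
      _ = f p.1 * H p := h2
  -- main computation
  have hmain : (∫ ω, (∫ x, R ω * ∑ i, (∫ y, θ (L ω) y * K (x - X ω - y) i) * φ x i) *
            (∫ x, R ω * ∑ i, (∫ y, θ (L ω) y * K (x - X ω - y) i) * ψ x i) ∂Pr)
      = σ2 * ∫ l, f l * ∫ x, H (l, x) := by
    calc (∫ ω, (∫ x, R ω * ∑ i, (∫ y, θ (L ω) y * K (x - X ω - y) i) * φ x i) *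
            (∫ x, R ω * ∑ i, (∫ y, θ (L ω) y * K (x - X ω - y) i) * ψ x i) ∂Pr)
        = ∫ ω, (R ω)^2 * H (L ω, X ω) ∂Pr :=
          integral_congr_ae (Filter.Eventually.of_forall hrw)
      _ = ∫ p : ℝ × (ℝ × Torus3), p.1^2 * H p.2 ∂(μR.prod (μL.prod volume)) := by
          have h := integral_map (μ := Pr) (φ := fun ω => (R ω, (L ω, X ω)))
            ((hRmeas.prodMk (hLmeas.prodMk hXmeas)).aemeasurable)
            (f := fun p : ℝ × (ℝ × Torus3) => p.1^2 * H p.2)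
            (((measurable_fst.pow_const 2).mul (hHm.comp measurable_snd)).aestronglyMeasurable)
          rw [hmapT'] at h
          exact h.symm
      _ = (∫ r, r^2 ∂μR) * ∫ q, H q ∂(μL.prod (volume : Measure Torus3)) :=
          integral_prod_mul (fun r : ℝ => r^2) H
      _ = σ2 * ∫ q, H q ∂(μL.prod (volume : Measure Torus3)) := by
          congr 1
          rw [← hσ2, hμR]
          exact integral_map hRmeas.aemeasurable
            ((measurable_id.pow_const 2).aestronglyMeasurable)
      _ = σ2 * ∫ p : ℝ × Torus3, f p.1 * H p ∂((volume : Measure ℝ).prod volume) := by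
          rw [hE2, hE3]
      _ = σ2 * ∫ l, f l * ∫ x, H (l, x) := by
          congr 1
          rw [MeasureTheory.integral_prod _ Hint]
          refine integral_congr_ae (Filter.Eventually.of_forall fun l => ?_)
          exact integral_const_mul (f l) _
  exact hmain
end
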